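/- arXiv:1412.5428 — 4 statements merged into one kernel-verified Lean document; each statement's English description precedes it below -/
import Mathlib

section
/- Every w ∈ W^Γ can be written as w = w_{J_1} ⋯ w_{J_r} with J_1, …, J_r ∈ S̄ and l(w) = l(w_{J_1}) + … + l(w_{J_r}). Moreover, if s ∈ S is such that l(sw) < l(w), then such a factorization can be chosen with s ∈ J_1. -/
open CoxeterSystem

/-- The subgroup of fixed points of a group `Γ` of automorphisms of `W`. -/
def fixedSubgroup {W : Type*} [Group W] (Γ : Subgroup (MulAut W)) : Subgroup W where
  carrier := {w | ∀ γ ∈ Γ, γ w = w}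
  one_mem' := fun γ _ => map_one γ
  mul_mem' := fun {a b} ha hb γ hγ => by rw [map_mul, ha γ hγ, hb γ hγ]
  inv_mem' := fun {a} ha γ hγ => by rw [map_inv, ha γ hγ]

/-- `I` is a `Γ`-orbit on the set `S` of simple reflections of `(W, S)` such that the
standard parabolic subgroup `W_I` generated by `I` is finite. -/
def IsFinParabolicOrbit {B W : Type*} [Group W] {M : CoxeterMatrix B}
    (cs : CoxeterSystem M W) (Γ : Subgroup (MulAut W)) (I : Set W) : Prop :=
  (∃ s ∈ Set.range cs.simple, I = {t | ∃ γ ∈ Γ, γ s = t}) ∧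
    Finite ↥(Subgroup.closure I)

/-- `w` is the longest element of the standard parabolic subgroup `W_I` generated by `I`. -/
def IsLongestIn {B W : Type*} [Group W] {M : CoxeterMatrix B}
    (cs : CoxeterSystem M W) (I : Set W) (w : W) : Prop :=
  w ∈ Subgroup.closure I ∧ ∀ u ∈ Subgroup.closure I, cs.length u ≤ cs.length w

open List
open scoped Classical

namespace Aux
section
variable {B W : Type*} [Group W] {M : CoxeterMatrix B} (cs : CoxeterSystem M W)
local prefix:100 "s" => cs.simple
local prefix:100 "π" => cs.wordProd
local prefix:100 "ℓ" => cs.length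



/-- The standard `ℤ/2`-cocycle permutation on `W × ZMod 2`. -/
noncomputable def sigma (i : B) : Equiv.Perm (W × ZMod 2) :=
  (Function.Involutive.toPerm
    (fun p => (s i * p.1 * s i, p.2 + if p.1 = s i then 1 else 0))
    (by
      rintro ⟨t, ε⟩
      have hss := cs.simple_mul_simple_self i
      have h1 : s i * (s i * t * s i) * s i = t := by
        calc s i * (s i * t * s i) * s i = (s i * s i) * t * (s i * s i) := by group
        _ = t := by rw [hss]; group
      have h2 : (s i * t * s i = s i) ↔ (t = s i) := by
        constructor
        · intro h
          have := congrArg (fun x => s i * x * s i) h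
          rw [h1] at this
          rw [this]
          calc s i * s i * s i = (s i * s i) * s i := by group
          _ = s i := by rw [hss]; group
        · rintro rfl
          rw [hss, one_mul]
      simp only [h1, h2]
      refine Prod.ext rfl ?_
      simp only
      by_cases h : t = s i <;> simp [h, add_assoc, show (1+1 : ZMod 2) = 0 from rfl]
      ))

theorem sigma_apply (i : B) (p : W × ZMod 2) :
    sigma cs i p = (s i * p.1 * s i, p.2 + if p.1 = s i then 1 else 0) := rfl



theorem conj_iff {W : Type*} [Group W] (a t u : W) : a * t * a⁻¹ = u ↔ t = a⁻¹ * u * a :=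
  ⟨fun h => by rw [← h]; group, fun h => by rw [h]; group⟩

theorem sigma_liftable : CoxeterMatrix.IsLiftable M (sigma cs) := by
  intro i j
  set m := M i j with hm
  set x : W := s i * s j with hx
  set g : W := x⁻¹ with hg
  have hssi := cs.simple_mul_simple_self i
  have hssj := cs.simple_mul_simple_self j
  have hxinv : x⁻¹ = s j * s i := by
    rw [hx, mul_inv_rev, cs.inv_simple, cs.inv_simple]
  have key : s j * x = g * s j := by
    rw [hg, hxinv, hx]; group
  have L1 : ∀ n : ℕ, s j * x ^ n = g ^ n * s j := by
    intro n
    induction n with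
    | zero => simp
    | succ n ih =>
      rw [pow_succ, ← mul_assoc, ih, mul_assoc, key, pow_succ]
      group
  have formula : ∀ n : ℕ, ∀ p : W × ZMod 2,
      ((sigma cs i * sigma cs j) ^ n) p =
        (x ^ n * p.1 * (x ^ n)⁻¹,
          p.2 + ∑ r ∈ Finset.range (2 * n), if p.1 = g ^ r * s j then 1 else 0) := by
    intro n
    induction n with
    | zero => rintro ⟨t, ε⟩; simp
    | succ n ih =>
      rintro ⟨t, ε⟩
      rw [pow_succ']
      have h0 : ((sigma cs i * sigma cs j) * (sigma cs i * sigma cs j) ^ n) (t, ε)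
          = (sigma cs i * sigma cs j) (((sigma cs i * sigma cs j) ^ n) (t, ε)) := rfl
      rw [h0, ih]
      set u : W := x ^ n * t * (x ^ n)⁻¹ with hu
      set δ : ZMod 2 := ε + ∑ r ∈ Finset.range (2 * n), if t = g ^ r * s j then 1 else 0 with hδ
      have happ : (sigma cs i * sigma cs j) (u, δ)
          = (x * u * x⁻¹, δ + ((if u = s j then 1 else 0) + if u = g * s j then 1 else 0)) := by
        show sigma cs i (sigma cs j (u, δ)) = _
        rw [sigma_apply, sigma_apply]
        refine Prod.ext ?_ ?_
        · show s i * (s j * u * s j) * s i = x * u * x⁻¹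
          rw [hx, hxinv]; group
        · show δ + (if u = s j then 1 else 0) + (if s j * u * s j = s i then 1 else 0) = _
          have hiff : (s j * u * s j = s i) = (u = g * s j) := by
            apply propext
            rw [show s j * u * s j = s j * u * (s j)⁻¹ by rw [cs.inv_simple],
              conj_iff, cs.inv_simple, hg, hxinv]
          rw [hiff, add_assoc]
      rw [happ]
      have hgpow : ∀ k : ℕ, (x ^ k)⁻¹ = g ^ k := fun k => by rw [hg, inv_pow]
      have cond1 : (u = s j) = (t = g ^ (2 * n) * s j) := by
        apply propext
        rw [hu, conj_iff]
        have : (x ^ n)⁻¹ * s j * x ^ n = g ^ (2 * n) * s j := by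
          rw [mul_assoc, L1 n, ← mul_assoc, hgpow, ← pow_add, two_mul]
        rw [this]
      have cond2 : (u = g * s j) = (t = g ^ (2 * n + 1) * s j) := by
        apply propext
        rw [hu, conj_iff]
        have e1 : (x ^ n)⁻¹ * (g * s j) * x ^ n = g ^ n * g * (g ^ n * s j) := by
          rw [hgpow, show g ^ n * (g * s j) * x ^ n = g ^ n * g * (s j * x ^ n) from by group,
            L1 n]
        have e2 : g ^ n * g * (g ^ n * s j) = g ^ (2 * n + 1) * s j := by
          rw [show 2 * n + 1 = n + 1 + n from by ring, pow_add, pow_add, pow_one]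
          group
        rw [e1, e2]
      refine Prod.ext ?_ ?_
      · show x * (x ^ n * t * (x ^ n)⁻¹) * x⁻¹ = x ^ (n + 1) * t * (x ^ (n + 1))⁻¹
        rw [pow_succ']; group
      · show δ + ((if u = s j then 1 else 0) + if u = g * s j then 1 else 0)
            = ε + ∑ r ∈ Finset.range (2 * (n + 1)), if t = g ^ r * s j then 1 else 0
        rw [cond1, cond2, hδ, show 2 * (n + 1) = 2 * n + 1 + 1 by ring,
          Finset.sum_range_succ, Finset.sum_range_succ]
        ring
  -- now the braid relation
  refine Equiv.ext fun p => ?_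
  obtain ⟨t, ε⟩ := p
  rw [formula m (t, ε)]
  have hxm : x ^ m = 1 := cs.simple_mul_simple_pow i j
  have hgm : g ^ m = 1 := by rw [hg, inv_pow, hxm, inv_one]
  refine Prod.ext ?_ ?_
  · show x ^ m * t * (x ^ m)⁻¹ = t
    rw [hxm]; group
  · show ε + ∑ r ∈ Finset.range (2 * m), (if t = g ^ r * s j then 1 else 0) = ε
    have hsplit : ∑ r ∈ Finset.range (2 * m), (if t = g ^ r * s j then (1 : ZMod 2) else 0)
        = ∑ r ∈ Finset.range m, (if t = g ^ r * s j then 1 else 0)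
          + ∑ r ∈ Finset.Ico m (2 * m), (if t = g ^ r * s j then 1 else 0) := by
      rw [Finset.sum_range_add_sum_Ico _ (by omega : m ≤ 2 * m)]
    have hshift : ∑ r ∈ Finset.Ico m (2 * m), (if t = g ^ r * s j then (1 : ZMod 2) else 0)
        = ∑ r ∈ Finset.range m, (if t = g ^ r * s j then 1 else 0) := by
      rw [Finset.sum_Ico_eq_sum_range]
      have : 2 * m - m = m := by omega
      rw [this]
      refine Finset.sum_congr rfl fun r _ => ?_
      have : g ^ (m + r) = g ^ r := by rw [pow_add, hgm, one_mul]
      rw [this]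
    rw [hsplit, hshift, ← two_smul ℕ]
    have : ∀ a : ZMod 2, 2 • a = 0 := by decide
    rw [this]
    exact add_zero ε

/-- The lifted homomorphism `W →* Perm (W × ZMod 2)`. -/
noncomputable def phi : W →* Equiv.Perm (W × ZMod 2) :=
  cs.lift ⟨sigma cs, sigma_liftable cs⟩

theorem phi_simple (i : B) : phi cs (s i) = sigma cs i :=
  cs.lift_apply_simple (sigma_liftable cs) i



theorem phi_wordProd (ω : List B) (p : W × ZMod 2) :
    phi cs (π ω) p = (π ω * p.1 * (π ω)⁻¹,
      p.2 + ((cs.rightInvSeq ω).count p.1 : ZMod 2)) := by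
  induction ω generalizing p with
  | nil => simp [rightInvSeq]
  | cons i ω ih =>
    rw [wordProd_cons, map_mul]
    show phi cs (s i) (phi cs (π ω) p) = _
    rw [ih, phi_simple, sigma_apply]
    have hris : cs.rightInvSeq (i :: ω) = ((π ω)⁻¹ * s i * π ω) :: cs.rightInvSeq ω := rfl
    refine Prod.ext ?_ ?_
    · show s i * (π ω * p.1 * (π ω)⁻¹) * s i = (s i * π ω) * p.1 * (s i * π ω)⁻¹
      rw [mul_inv_rev, cs.inv_simple]; group
    · show p.2 + ((cs.rightInvSeq ω).count p.1 : ZMod 2)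
          + (if π ω * p.1 * (π ω)⁻¹ = s i then 1 else 0) = _
      rw [hris, List.count_cons]
      have hiff : (π ω * p.1 * (π ω)⁻¹ = s i) = (p.1 = (π ω)⁻¹ * s i * π ω) := by
        apply propext
        rw [conj_iff]
      have hbeq : (p.1 == (π ω)⁻¹ * s i * π ω) = decide (p.1 = (π ω)⁻¹ * s i * π ω) := rfl
      push_cast
      rw [hiff]
      by_cases h : p.1 = (π ω)⁻¹ * s i * π ω
      · rw [if_pos h, if_pos (by simp [beq_iff_eq, h])]; ring
      · rw [if_neg h, if_neg (by simp only [beq_iff_eq]; exact fun hh => h hh.symm)]; ring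

theorem count_ris_parity {ω ω' : List B} (h : π ω = π ω') (t : W) :
    ((cs.rightInvSeq ω).count t : ZMod 2) = ((cs.rightInvSeq ω').count t : ZMod 2) := by
  have h1 := phi_wordProd cs ω (t, 0)
  have h2 := phi_wordProd cs ω' (t, 0)
  rw [h] at h1
  rw [h1] at h2
  have := congrArg Prod.snd h2
  simpa using this

theorem count_lis_parity {ω ω' : List B} (h : π ω = π ω') (t : W) :
    ((cs.leftInvSeq ω).count t : ZMod 2) = ((cs.leftInvSeq ω').count t : ZMod 2) := by
  have hrev : π ω.reverse = π ω'.reverse := by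
    rw [wordProd_reverse, wordProd_reverse, h]
  have := count_ris_parity cs hrev t
  rwa [rightInvSeq_reverse, rightInvSeq_reverse, List.count_reverse, List.count_reverse] at this

/-- The exchange property for simple reflections. -/
theorem exists_leftExchange {ω : List B} (hω : cs.IsReduced ω) {i : B}
    (h : ℓ (s i * π ω) < ℓ (π ω)) :
    ∃ j < ω.length, s i * π ω = π (ω.eraseIdx j) := by
  obtain ⟨ω', hlen, hprod⟩ := cs.exists_reduced_word (s i * π ω)
  have hπ : π (i :: ω') = π ω := by
    rw [wordProd_cons, ← hprod, ← mul_assoc, cs.simple_mul_simple_self, one_mul]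
  have hlen'' : (i :: ω').length ≤ ℓ (π ω) := by
    rw [List.length_cons, ← hlen, ← hprod]
    omega
  have hred'' : cs.IsReduced (i :: ω') := by
    have h1 : ℓ (π (i :: ω')) ≤ (i :: ω').length := cs.length_wordProd_le _
    have h2 : ℓ (π ω) ≤ (i :: ω').length := by rwa [hπ] at h1
    exact le_antisymm h1 (by rw [hπ]; exact hlen'')
  have hmem : s i ∈ cs.leftInvSeq (i :: ω') := by
    show s i ∈ s i :: _
    exact List.mem_cons_self
  have hnodup : (cs.leftInvSeq (i :: ω')).Nodup := hred''.nodup_leftInvSeq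
  have hcount'' : (cs.leftInvSeq (i :: ω')).count (s i) = 1 :=
    List.count_eq_one_of_mem hnodup hmem
  have hpar := count_lis_parity cs hπ (s i)
  rw [hcount''] at hpar
  have hmemω : s i ∈ cs.leftInvSeq ω := by
    by_contra hc
    rw [List.count_eq_zero_of_not_mem hc] at hpar
    simp at hpar
  obtain ⟨j, hj, hget⟩ := List.mem_iff_getElem.mp hmemω
  rw [cs.length_leftInvSeq] at hj
  refine ⟨j, hj, ?_⟩
  have hgetD : (cs.leftInvSeq ω).getD j 1 = s i := by
    rw [List.getD_eq_getElem _ _ (by rwa [cs.length_leftInvSeq])]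
    exact hget
  have := cs.getD_leftInvSeq_mul_wordProd ω j
  rwa [hgetD] at this



/-- The key splitting step: if `s i` is a left descent of `w`, `u` is a length-additive
prefix of `w`, and `ℓ (s i * u) = ℓ u + 1`, then `s i * u` is a length-additive prefix. -/
theorem step_lemma {i : B} {w u : W} (hsw : ℓ (s i * w) < ℓ w)
    (hu : ℓ u + ℓ (u⁻¹ * w) = ℓ w) (hsu : ℓ (s i * u) = ℓ u + 1) :
    ℓ (s i * u) + ℓ ((s i * u)⁻¹ * w) = ℓ w := by
  obtain ⟨ω₁, hl1, hp1⟩ := cs.exists_reduced_word u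
  obtain ⟨ω₂, hl2, hp2⟩ := cs.exists_reduced_word (u⁻¹ * w)
  set ω : List B := ω₁ ++ ω₂ with hω
  have hπ : π ω = w := by
    rw [hω, wordProd_append, ← hp1, ← hp2]
    group
  have hred : cs.IsReduced ω := by
    show ℓ (π ω) = ω.length
    rw [hπ, hω, List.length_append, ← hl1, ← hl2, ← hp1, ← hp2]
    exact hu.symm
  have hsw' : ℓ (s i * π ω) < ℓ (π ω) := by rw [hπ]; exact hsw
  obtain ⟨j, hj, hex⟩ := exists_leftExchange cs hred hsw'
  rw [hπ] at hex
  rw [hω, List.length_append] at hj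
  by_cases hcase : j < ω₁.length
  · exfalso
    have herase : ω.eraseIdx j = ω₁.eraseIdx j ++ ω₂ :=
      List.eraseIdx_append_of_lt_length hcase ω₂
    have heq : s i * u = π (ω₁.eraseIdx j) := by
      have h1 : s i * w = π (ω₁.eraseIdx j) * (u⁻¹ * w) := by
        rw [hex, herase, wordProd_append, ← hp2]
      calc s i * u = (s i * w) * (u⁻¹ * w)⁻¹ := by group
        _ = π (ω₁.eraseIdx j) * (u⁻¹ * w) * (u⁻¹ * w)⁻¹ := by rw [h1]
        _ = π (ω₁.eraseIdx j) := by group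
    have hle : ℓ (s i * u) ≤ ω₁.length - 1 := by
      rw [heq]
      have h2 := cs.length_wordProd_le (ω₁.eraseIdx j)
      rwa [List.length_eraseIdx_of_lt hcase] at h2
    have hl1' : ℓ u = ω₁.length := by rw [hp1]; exact hl1
    omega
  · push_neg at hcase
    have herase : ω.eraseIdx j = ω₁ ++ ω₂.eraseIdx (j - ω₁.length) :=
      List.eraseIdx_append_of_length_le hcase ω₂
    have heq : (s i * u)⁻¹ * w = π (ω₂.eraseIdx (j - ω₁.length)) := by
      have h1 : s i * w = u * π (ω₂.eraseIdx (j - ω₁.length)) := by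
        rw [hex, herase, wordProd_append, ← hp1]
      calc (s i * u)⁻¹ * w = u⁻¹ * ((s i)⁻¹ * w) := by group
        _ = u⁻¹ * (s i * w) := by rw [cs.inv_simple]
        _ = u⁻¹ * (u * π (ω₂.eraseIdx (j - ω₁.length))) := by rw [h1]
        _ = π (ω₂.eraseIdx (j - ω₁.length)) := by group
    have hle : ℓ ((s i * u)⁻¹ * w) ≤ ω₂.length - 1 := by
      rw [heq]
      have h2 := cs.length_wordProd_le (ω₂.eraseIdx (j - ω₁.length))
      rwa [List.length_eraseIdx_of_lt (by omega)] at h2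
    have hge : ℓ w ≤ ℓ (s i * u) + ℓ ((s i * u)⁻¹ * w) := by
      have := cs.length_mul_le (s i * u) ((s i * u)⁻¹ * w)
      have hmul : (s i * u) * ((s i * u)⁻¹ * w) = w := by group
      rwa [hmul] at this
  -- ℓ(s i * u) = ℓ u + 1, ℓ((s i u)⁻¹ w) ≤ ℓ(u⁻¹ w) − 1, sum ≥ ℓ w forces equality
    have hl2' : ℓ (u⁻¹ * w) = ω₂.length := by rw [hp2]; exact hl2
    omega



theorem exists_reduced_sublist : ∀ (n : ℕ) (ω : List B), ω.length ≤ n →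
    ∃ ω' : List B, cs.IsReduced ω' ∧ π ω' = π ω ∧ ∀ b ∈ ω', b ∈ ω := by
  intro n
  induction n with
  | zero =>
    intro ω h
    have : ω = [] := List.eq_nil_of_length_eq_zero (by omega)
    subst this
    exact ⟨[], by simp [CoxeterSystem.IsReduced], rfl, by simp⟩
  | succ n ih =>
    intro ω h
    match ω with
    | [] => exact ⟨[], by simp [CoxeterSystem.IsReduced], rfl, by simp⟩
    | c :: ω₀ =>
      obtain ⟨ω₁, hred₁, hπ₁, hsub₁⟩ := ih ω₀ (by simp at h; omega)
      have hlen₁ : ω₁.length ≤ n := by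
        have : ℓ (π ω₁) ≤ ω₀.length := hπ₁ ▸ cs.length_wordProd_le ω₀
        have hh : ω₁.length = ℓ (π ω₁) := hred₁.symm
        simp at h; omega
      rcases cs.length_simple_mul (π ω₁) c with hc | hc
      · refine ⟨c :: ω₁, ?_, ?_, ?_⟩
        · show ℓ (π (c :: ω₁)) = (c :: ω₁).length
          rw [wordProd_cons, hc, hred₁, List.length_cons]
        · rw [wordProd_cons, hπ₁, ← wordProd_cons]
        · intro b hb
          rcases List.mem_cons.mp hb with rfl | hb
          · exact List.mem_cons_self
          · exact List.mem_cons_of_mem _ (hsub₁ b hb)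
      · have hlt : ℓ (s c * π ω₁) < ℓ (π ω₁) := by omega
        obtain ⟨j, hj, hex⟩ := exists_leftExchange cs hred₁ hlt
        have hlen : (ω₁.eraseIdx j).length ≤ n := by
          rw [List.length_eraseIdx_of_lt hj]
          omega
        obtain ⟨ω₂, hred₂, hπ₂, hsub₂⟩ := ih (ω₁.eraseIdx j) hlen
        refine ⟨ω₂, hred₂, ?_, ?_⟩
        · rw [hπ₂, ← hex, hπ₁, ← wordProd_cons]
        · intro b hb
          exact List.mem_cons_of_mem _ (hsub₁ b (List.eraseIdx_subset (hsub₂ b hb)))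

theorem wordProd_mem_closure {I : Set W} {ω : List B} (hmem : ∀ b ∈ ω, s b ∈ I) :
    π ω ∈ Subgroup.closure I := by
  induction ω with
  | nil => rw [wordProd_nil]; exact one_mem _
  | cons c ω ih =>
    rw [wordProd_cons]
    exact mul_mem (Subgroup.subset_closure (hmem c (List.mem_cons_self)))
      (ih fun b hb => hmem b (List.mem_cons_of_mem _ hb))

theorem exists_reduced_word_subset {I : Set W} (hI : I ⊆ Set.range cs.simple) {u : W}
    (hu : u ∈ Subgroup.closure I) :
    ∃ ω : List B, cs.IsReduced ω ∧ π ω = u ∧ ∀ b ∈ ω, s b ∈ I := by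
  have hex : ∃ ω : List B, π ω = u ∧ ∀ b ∈ ω, s b ∈ I := by
    induction hu using Subgroup.closure_induction with
    | mem x hx =>
      obtain ⟨b, hb⟩ := hI hx
      exact ⟨[b], by simp [hb], by simp [hb, hx]⟩
    | one => exact ⟨[], by simp, by simp⟩
    | mul a b _ _ iha ihb =>
      obtain ⟨ωa, hπa, hma⟩ := iha
      obtain ⟨ωb, hπb, hmb⟩ := ihb
      refine ⟨ωa ++ ωb, by rw [wordProd_append, hπa, hπb], ?_⟩
      intro x hx
      rcases List.mem_append.mp hx with hx | hx
      · exact hma x hx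
      · exact hmb x hx
    | inv a _ iha =>
      obtain ⟨ωa, hπa, hma⟩ := iha
      refine ⟨ωa.reverse, by rw [wordProd_reverse, hπa], ?_⟩
      intro x hx
      exact hma x (List.mem_reverse.mp hx)
  obtain ⟨ω, hπ, hmem⟩ := hex
  obtain ⟨ω', hred, hπ', hsub⟩ := exists_reduced_sublist cs ω.length ω le_rfl
  exact ⟨ω', hred, by rw [hπ', hπ], fun b hb => hmem b (hsub b hb)⟩

theorem exists_descent_in {I : Set W} (hI : I ⊆ Set.range cs.simple) {u : W}
    (hu : u ∈ Subgroup.closure I) (hne : u ≠ 1) :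
    ∃ c : B, s c ∈ I ∧ ℓ (s c * u) + 1 = ℓ u ∧ s c * u ∈ Subgroup.closure I := by
  obtain ⟨ω, hred, hπ, hmem⟩ := exists_reduced_word_subset cs hI hu
  match ω, hred, hπ, hmem with
  | [], _, hπ, _ => exact absurd (by rw [← hπ, wordProd_nil]) hne
  | c :: ω₀, hred, hπ, hmem =>
    have hcu : s c * u = π ω₀ := by
      rw [← hπ, wordProd_cons, ← mul_assoc, cs.simple_mul_simple_self, one_mul]
    have hle : ℓ (s c * u) ≤ ω₀.length := hcu ▸ cs.length_wordProd_le ω₀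
    have hlu : ℓ u = ω₀.length + 1 := by
      have : ℓ (π (c :: ω₀)) = (c :: ω₀).length := hred
      rw [hπ] at this
      simpa using this
    have hge : ℓ u ≤ ℓ (s c * u) + 1 := by
      rcases cs.length_simple_mul u c with h' | h' <;> omega
    refine ⟨c, hmem c (List.mem_cons_self), by omega, ?_⟩
    rw [hcu]
    exact wordProd_mem_closure cs fun b hb => hmem b (List.mem_cons_of_mem _ hb)

theorem prefix_lemma {I : Set W} (hI : I ⊆ Set.range cs.simple) {w : W}
    (hdesc : ∀ t ∈ I, ℓ (t * w) < ℓ w) :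
    ∀ u ∈ Subgroup.closure I, ℓ u + ℓ (u⁻¹ * w) = ℓ w := by
  suffices h : ∀ n : ℕ, ∀ u ∈ Subgroup.closure I, ℓ u = n → ℓ u + ℓ (u⁻¹ * w) = ℓ w by
    intro u hu
    exact h (ℓ u) u hu rfl
  intro n
  induction n using Nat.strong_induction_on with
  | _ n ih =>
    intro u hu hn
    by_cases h1 : u = 1
    · simp [h1]
    · obtain ⟨c, hcI, hcu, hcm⟩ := exists_descent_in cs hI hu h1
      set u' := s c * u with hu'
      have hscu' : s c * u' = u := by
        rw [hu', ← mul_assoc, cs.simple_mul_simple_self, one_mul]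
      have hlt : ℓ u' < n := by omega
      have hadd : ℓ u' + ℓ (u'⁻¹ * w) = ℓ w := ih (ℓ u') hlt u' hcm rfl
      have hsu : ℓ (s c * u') = ℓ u' + 1 := by rw [hscu']; omega
      have := step_lemma cs (hdesc (s c) hcI) hadd hsu
      rwa [hscu'] at this

theorem closure_finite [Finite B] {I : Set W} {n : ℕ}
    (hbound : ∀ u ∈ Subgroup.closure I, ℓ u ≤ n) : Finite ↥(Subgroup.closure I) := by
  have h1 : ((Subgroup.closure I : Subgroup W) : Set W)
      ⊆ cs.wordProd '' {ω : List B | ω.length ≤ n} := by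
    intro x hx
    obtain ⟨ω, hlen, hprod⟩ := cs.exists_reduced_word x
    exact ⟨ω, by simp only [Set.mem_setOf_eq]; rw [← hlen, ← hprod]; exact hbound x hx, hprod.symm⟩
  have h2 : (cs.wordProd '' {ω : List B | ω.length ≤ n}).Finite :=
    (List.finite_length_le B n).image _
  exact (h2.subset h1).to_subtype

theorem longest_unique {I : Set W} (hI : I ⊆ Set.range cs.simple) {v₀ v₁ : W}
    (m₀ : v₀ ∈ Subgroup.closure I) (x₀ : ∀ u ∈ Subgroup.closure I, ℓ u ≤ ℓ v₀)
    (m₁ : v₁ ∈ Subgroup.closure I) (x₁ : ∀ u ∈ Subgroup.closure I, ℓ u ≤ ℓ v₁) :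
    v₀ = v₁ := by
  have hdesc : ∀ t ∈ I, ℓ (t * v₀) < ℓ v₀ := by
    intro t ht
    obtain ⟨b, hb⟩ := hI ht
    subst hb
    have hmem : s b * v₀ ∈ Subgroup.closure I :=
      mul_mem (Subgroup.subset_closure ht) m₀
    have hle := x₀ _ hmem
    have hne := cs.length_simple_mul_ne v₀ b
    omega
  have hadd := prefix_lemma cs hI hdesc v₁ m₁
  have hle := x₁ v₀ m₀
  have h0 : ℓ (v₁⁻¹ * v₀) = 0 := by
    have := x₀ v₁ m₁
    omega
  have := cs.length_eq_zero_iff.mp h0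
  have : v₀ = v₁ * 1 := by rw [← this]; group
  simpa using this



theorem length_apply_le {γ : MulAut W} (hs : ∀ b : B, γ (s b) ∈ Set.range cs.simple)
    (v : W) : ℓ (γ v) ≤ ℓ v := by
  obtain ⟨ω, hlen, hprod⟩ := cs.exists_reduced_word v
  choose f hf using hs
  have hmap : ∀ ω' : List B, γ (π ω') = π (ω'.map f) := by
    intro ω'
    induction ω' with
    | nil => simp
    | cons c ω' ih => rw [wordProd_cons, map_mul, ih, List.map_cons, wordProd_cons, hf]
  calc ℓ (γ v) = ℓ (π (ω.map f)) := by rw [hprod, hmap]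
    _ ≤ (ω.map f).length := cs.length_wordProd_le _
    _ = ω.length := List.length_map _
    _ = ℓ v := by rw [hprod]; exact hlen.symm

theorem length_apply {Γ : Subgroup (MulAut W)}
    (hΓ : ∀ γ ∈ Γ, ⇑γ '' Set.range cs.simple = Set.range cs.simple)
    {γ : MulAut W} (hγ : γ ∈ Γ) (v : W) : ℓ (γ v) = ℓ v := by
  have hmem : ∀ (δ : MulAut W), δ ∈ Γ → ∀ b : B, δ (s b) ∈ Set.range cs.simple := by
    intro δ hδ b
    rw [← hΓ δ hδ]
    exact ⟨s b, ⟨b, rfl⟩, rfl⟩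
  refine le_antisymm (length_apply_le cs (hmem γ hγ) v) ?_
  have := length_apply_le cs (hmem γ⁻¹ (inv_mem hγ)) (γ v)
  simpa using this


end
end Aux

/-- every `w ∈ W^Γ` factors length-additively as a product of longest
elements `w_{J_i}` with `J_i ∈ S̄`; moreover if `l(sw) < l(w)` then one can take `s ∈ J₁`. -/
theorem exists_factorization {B W : Type*} [Finite B] [Group W] {M : CoxeterMatrix B}
    (cs : CoxeterSystem M W) (Γ : Subgroup (MulAut W))
    (hΓ : ∀ γ ∈ Γ, ⇑γ '' Set.range cs.simple = Set.range cs.simple)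
    (wI : Set W → W)
    (hwI : ∀ I : Set W, IsFinParabolicOrbit cs Γ I → IsLongestIn cs I (wI I))
    (w : W) (hw : w ∈ fixedSubgroup Γ) :
    (∃ Js : List (Set W), (∀ J ∈ Js, IsFinParabolicOrbit cs Γ J) ∧
        w = (Js.map wI).prod ∧
        cs.length w = ((Js.map wI).map cs.length).sum) ∧
      ∀ s ∈ Set.range cs.simple, cs.length (s * w) < cs.length w →
        ∃ Js : List (Set W), (∀ J ∈ Js, IsFinParabolicOrbit cs Γ J) ∧
          w = (Js.map wI).prod ∧
          cs.length w = ((Js.map wI).map cs.length).sum ∧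
          ∃ J₁, Js.head? = some J₁ ∧ s ∈ J₁ := by
  classical
  suffices key : ∀ n : ℕ, ∀ w, w ∈ fixedSubgroup Γ → cs.length w = n →
      (∃ Js : List (Set W), (∀ J ∈ Js, IsFinParabolicOrbit cs Γ J) ∧
        w = (Js.map wI).prod ∧
        cs.length w = ((Js.map wI).map cs.length).sum) ∧
      ∀ s ∈ Set.range cs.simple, cs.length (s * w) < cs.length w →
        ∃ Js : List (Set W), (∀ J ∈ Js, IsFinParabolicOrbit cs Γ J) ∧
          w = (Js.map wI).prod ∧
          cs.length w = ((Js.map wI).map cs.length).sum ∧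
          ∃ J₁, Js.head? = some J₁ ∧ s ∈ J₁ by
    exact key (cs.length w) w hw rfl
  intro n
  induction n using Nat.strong_induction_on with
  | _ n ih =>
    intro w hw hn
    have part2 : ∀ t ∈ Set.range cs.simple, cs.length (t * w) < cs.length w →
        ∃ Js : List (Set W), (∀ J ∈ Js, IsFinParabolicOrbit cs Γ J) ∧
          w = (Js.map wI).prod ∧
          cs.length w = ((Js.map wI).map cs.length).sum ∧
          ∃ J₁, Js.head? = some J₁ ∧ t ∈ J₁ := by
      rintro t ⟨i, rfl⟩ hlt
      set I : Set W := {x | ∃ γ ∈ Γ, γ (cs.simple i) = x} with hIdef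
      have hsI : cs.simple i ∈ I := ⟨1, one_mem Γ, rfl⟩
      have hIs : I ⊆ Set.range cs.simple := by
        rintro x ⟨γ, hγ, rfl⟩
        rw [← hΓ γ hγ]
        exact ⟨cs.simple i, ⟨i, rfl⟩, rfl⟩
      have hdesc : ∀ x ∈ I, cs.length (x * w) < cs.length w := by
        rintro x ⟨γ, hγ, rfl⟩
        have hgw : γ w = w := hw γ hγ
        have hh : γ (cs.simple i) * w = γ (cs.simple i * w) := by rw [map_mul, hgw]
        rw [hh, Aux.length_apply cs hΓ hγ]
        exact hlt
      have hpre := Aux.prefix_lemma cs hIs hdesc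
      have hfin : Finite ↥(Subgroup.closure I) := by
        refine Aux.closure_finite cs (n := cs.length w) fun u hu => ?_
        have := hpre u hu
        omega
      have horb : IsFinParabolicOrbit cs Γ I := ⟨⟨cs.simple i, ⟨i, rfl⟩, rfl⟩, hfin⟩
      obtain ⟨hv₀mem, hv₀max⟩ := hwI I horb
      have hγclos : ∀ γ ∈ Γ, ∀ u ∈ Subgroup.closure I, γ u ∈ Subgroup.closure I := by
        intro γ hγ u hu
        induction hu using Subgroup.closure_induction with
        | mem x hx =>
          obtain ⟨δ, hδ, rfl⟩ := hx
          exact Subgroup.subset_closure ⟨γ * δ, mul_mem hγ hδ, rfl⟩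
        | one => rw [map_one]; exact one_mem _
        | mul a b _ _ iha ihb => rw [map_mul]; exact mul_mem iha ihb
        | inv a _ iha => rw [map_inv]; exact inv_mem iha
      have hv₀fix : ∀ γ ∈ Γ, γ (wI I) = wI I := by
        intro γ hγ
        refine (Aux.longest_unique cs hIs hv₀mem hv₀max
          (hγclos γ hγ _ hv₀mem) ?_).symm
        intro u hu
        rw [Aux.length_apply cs hΓ hγ]
        exact hv₀max u hu
      have hadd := hpre (wI I) hv₀mem
      have hv₀pos : 1 ≤ cs.length (wI I) := by
        have h1 := hv₀max _ (Subgroup.subset_closure hsI)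
        rw [cs.length_simple] at h1
        exact h1
      set w' := (wI I)⁻¹ * w with hw'def
      have hw'lt : cs.length w' < n := by omega
      have hw'fix : w' ∈ fixedSubgroup Γ := by
        intro γ hγ
        show γ ((wI I)⁻¹ * w) = (wI I)⁻¹ * w
        rw [map_mul, map_inv, hv₀fix γ hγ, hw γ hγ]
      obtain ⟨Js', hJs'1, hJs'2, hJs'3⟩ := (ih (cs.length w') hw'lt w' hw'fix rfl).1
      refine ⟨I :: Js', ?_, ?_, ?_, ⟨I, rfl, hsI⟩⟩
      · intro J hJ
        rcases List.mem_cons.mp hJ with rfl | hJ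
        · exact horb
        · exact hJs'1 J hJ
      · rw [List.map_cons, List.prod_cons, ← hJs'2, hw'def]
        group
      · rw [List.map_cons, List.map_cons, List.sum_cons, ← hJs'3]
        omega
    refine ⟨?_, part2⟩
    by_cases h1 : w = 1
    · exact ⟨[], by simp, by simp [h1], by simp [h1]⟩
    · obtain ⟨i, hi⟩ := cs.exists_leftDescent_of_ne_one h1
      obtain ⟨Js, ha, hb, hc, _⟩ := part2 (cs.simple i) ⟨i, rfl⟩ hi
      exact ⟨Js, ha, hb, hc⟩
end

section
/- For every I ∈ S̄, the group of Γ-fixed points of the finite parabolic subgroup W_I is exactly {1, w_I}. -/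
open CoxeterSystem

/-! ### Auxiliary development: parity representation, strong exchange, parabolic words -/

namespace CoxAux

attribute [local instance] Classical.propDecidable

noncomputable section

theorem zmod2_add_self (x : ZMod 2) : x + x = 0 := by
  have h2 : (2 : ZMod 2) = 0 := rfl
  calc x + x = 2 * x := (two_mul x).symm
  _ = 0 := by rw [h2, zero_mul]

theorem zmod2_eq_of_add_eq_zero {x y : ZMod 2} (h : x + y = 0) : x = y := by
  revert h; revert y; revert x; decide

theorem zmod2_cases (x : ZMod 2) : x = 0 ∨ x = 1 := by revert x; decide

/-- Helper group: `W ⋉ (W → ZMod 2)`. -/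
structure DW (W : Type*) where
  el : W
  fn : W → ZMod 2

namespace DW

variable {W : Type*} [Group W]

instance : Mul (DW W) :=
  ⟨fun a b => ⟨a.el * b.el, fun t => a.fn (b.el * t * b.el⁻¹) + b.fn t⟩⟩
instance : One (DW W) := ⟨⟨1, fun _ => 0⟩⟩
instance : Inv (DW W) := ⟨fun a => ⟨a.el⁻¹, fun t => a.fn (a.el⁻¹ * t * a.el)⟩⟩

theorem mul_def (a b : DW W) :
    a * b = ⟨a.el * b.el, fun t => a.fn (b.el * t * b.el⁻¹) + b.fn t⟩ := rfl
theorem one_def : (1 : DW W) = ⟨1, fun _ => 0⟩ := rfl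

theorem ext' {a b : DW W} (h1 : a.el = b.el) (h2 : ∀ t, a.fn t = b.fn t) : a = b := by
  cases a; cases b
  simp only [DW.mk.injEq]
  exact ⟨h1, funext h2⟩

instance : Group (DW W) where
  mul_assoc a b c := by
    show DW.mk _ _ = DW.mk _ _
    congr 1
    · exact mul_assoc _ _ _
    · funext t
      show a.fn (b.el * (c.el * t * c.el⁻¹) * b.el⁻¹) + b.fn (c.el * t * c.el⁻¹) + c.fn t
        = a.fn (b.el * c.el * t * (b.el * c.el)⁻¹) + (b.fn (c.el * t * c.el⁻¹) + c.fn t)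
      rw [add_assoc]
      have h : b.el * (c.el * t * c.el⁻¹) * b.el⁻¹ = b.el * c.el * t * (b.el * c.el)⁻¹ := by
        group
      rw [h]
  one_mul a := by
    cases a with
    | mk u f =>
      show DW.mk _ _ = DW.mk u f
      congr 1
      · exact one_mul u
      · funext t
        show (0 : ZMod 2) + f t = f t
        rw [zero_add]
  mul_one a := by
    cases a with
    | mk u f =>
      show DW.mk _ _ = DW.mk u f
      congr 1
      · exact mul_one u
      · funext t
        show f (1 * t * 1⁻¹) + 0 = f t
        rw [add_zero]
        congr 1
        group
  inv_mul_cancel a := by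
    show DW.mk _ _ = DW.mk _ _
    congr 1
    · exact inv_mul_cancel _
    · funext t
      show a.fn (a.el⁻¹ * (a.el * t * a.el⁻¹) * a.el) + a.fn t = 0
      have h : a.el⁻¹ * (a.el * t * a.el⁻¹) * a.el = t := by group
      rw [h]
      exact CoxAux.zmod2_add_self _

end DW

section

variable {B W : Type*} [Group W] {M : CoxeterMatrix B} (cs : CoxeterSystem M W)

local prefix:100 "s" => cs.simple
local prefix:100 "π" => cs.wordProd
local prefix:100 "ℓ" => cs.length

theorem conj_eq_iff (a t c : W) : (a * t * a⁻¹ = c) ↔ (t = a⁻¹ * c * a) := by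
  constructor
  · intro h; rw [← h]; group
  · intro h; rw [h]; group

/-- The generator images of the parity representation. -/
def eta (i : B) : DW W := ⟨s i, fun t => if t = s i then 1 else 0⟩

theorem eta_liftable : M.IsLiftable (fun i => eta cs i) := by
  intro i j
  have hq : ∀ n : ℕ, (eta cs i * eta cs j) ^ n =
      ⟨(s i * s j) ^ n,
        fun t => ∑ b ∈ Finset.range (2 * n),
          if t = (s j * s i) ^ b * s j then 1 else 0⟩ := by
    intro n
    induction n with
    | zero =>
      apply DW.ext'
      · rw [pow_zero, pow_zero]; rfl
      · intro t
        rw [pow_zero]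
        dsimp only
        show (0 : ZMod 2) = _
        simp
    | succ n ih =>
      rw [pow_succ, ih, DW.mul_def]
      have hel : (eta cs i * eta cs j).el = s i * s j := rfl
      congr 1
      · rw [hel, pow_succ]
      funext t
      show (∑ b ∈ Finset.range (2 * n),
          if (eta cs i * eta cs j).el * t * (eta cs i * eta cs j).el⁻¹
            = (s j * s i) ^ b * s j then (1 : ZMod 2) else 0)
          + (eta cs i * eta cs j).fn t = _
      have hfn : (eta cs i * eta cs j).fn t
          = (if t = (s j * s i) ^ 1 * s j then (1 : ZMod 2) else 0)
            + (if t = (s j * s i) ^ 0 * s j then (1 : ZMod 2) else 0) := by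
        show (if (s j) * t * (s j)⁻¹ = s i then (1 : ZMod 2) else 0)
            + (if t = s j then (1 : ZMod 2) else 0) = _
        congr 1
        · apply if_congr _ rfl rfl
          rw [conj_eq_iff, cs.inv_simple, pow_one]
        · apply if_congr _ rfl rfl
          rw [pow_zero, one_mul]
      have hcond : ∀ b : ℕ,
          ((eta cs i * eta cs j).el * t * (eta cs i * eta cs j).el⁻¹
            = (s j * s i) ^ b * s j)
          ↔ (t = (s j * s i) ^ (b + 2) * s j) := by
        intro b
        rw [hel, conj_eq_iff]
        have hAB : (s i * s j)⁻¹ * ((s j * s i) ^ b * s j) * (s i * s j)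
            = (s j * s i) ^ (b + 2) * s j := by
          have e1 : (s j * s i) ^ (b + 2) = (s j * s i) * ((s j * s i) ^ b * (s j * s i)) := by
            rw [pow_succ, pow_succ', mul_assoc]
          rw [e1, mul_inv_rev, cs.inv_simple, cs.inv_simple]
          group
        rw [hAB]
      have hrw : (∑ b ∈ Finset.range (2 * n),
          if (eta cs i * eta cs j).el * t * (eta cs i * eta cs j).el⁻¹
            = (s j * s i) ^ b * s j then (1 : ZMod 2) else 0)
          = ∑ b ∈ Finset.range (2 * n),
            if t = (s j * s i) ^ (b + 2) * s j then (1 : ZMod 2) else 0 := by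
        refine Finset.sum_congr rfl fun b _ => ?_
        exact if_congr (hcond b) rfl rfl
      rw [hrw, hfn]
      have expand : (∑ b ∈ Finset.range (2 * (n + 1)),
          if t = (s j * s i) ^ b * s j then (1 : ZMod 2) else 0)
          = (∑ b ∈ Finset.range (2 * n),
              if t = (s j * s i) ^ (b + 2) * s j then (1 : ZMod 2) else 0)
            + (if t = (s j * s i) ^ 1 * s j then (1 : ZMod 2) else 0)
            + (if t = (s j * s i) ^ 0 * s j then (1 : ZMod 2) else 0) := by
        rw [show 2 * (n + 1) = (2 * n + 1) + 1 by ring, Finset.sum_range_succ',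
          Finset.sum_range_succ']
      rw [expand, add_assoc]
  rw [hq (M i j)]
  apply DW.ext'
  · exact cs.simple_mul_simple_pow i j
  intro t
  dsimp only
  have hq1 : (s j * s i) ^ M i j = 1 := cs.simple_mul_simple_pow' i j
  rw [two_mul, Finset.sum_range_add]
  have heq : ∀ b ∈ Finset.range (M i j),
      (if t = (s j * s i) ^ (M i j + b) * s j then (1 : ZMod 2) else 0)
      = (if t = (s j * s i) ^ b * s j then (1 : ZMod 2) else 0) := by
    intro b _
    apply if_congr _ rfl rfl
    rw [pow_add, hq1, one_mul]
  rw [Finset.sum_congr rfl heq, ← Finset.sum_add_distrib]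
  refine Finset.sum_eq_zero fun b _ => ?_
  exact zmod2_add_self _

/-- The parity representation `W →* W ⋉ (W → ZMod 2)`. -/
def phi : W →* DW W := cs.lift ⟨fun i => eta cs i, eta_liftable cs⟩

theorem phi_simple (i : B) : phi cs (s i) = eta cs i :=
  cs.lift_apply_simple (eta_liftable cs) i

theorem phi_wordProd (ω : List B) :
    phi cs (π ω) = ⟨π ω, fun t => ((cs.rightInvSeq ω).count t : ZMod 2)⟩ := by
  induction ω with
  | nil =>
    rw [cs.wordProd_nil, map_one]
    apply DW.ext'
    · rfl
    intro t
    dsimp only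
    show (0 : ZMod 2) = _
    rw [cs.rightInvSeq_nil, List.count_nil, Nat.cast_zero]
  | cons i ω ih =>
    rw [cs.wordProd_cons, map_mul, phi_simple, ih, DW.mul_def]
    apply DW.ext'
    · exact (cs.wordProd_cons i ω).symm
    intro t
    dsimp only
    show (if (π ω) * t * (π ω)⁻¹ = s i then (1 : ZMod 2) else 0)
        + ((cs.rightInvSeq ω).count t : ZMod 2) = _
    have hris : cs.rightInvSeq (i :: ω) = ((π ω)⁻¹ * s i * π ω) :: cs.rightInvSeq ω := rfl
    have hiff : ((π ω) * t * (π ω)⁻¹ = s i) ↔ ((π ω)⁻¹ * s i * π ω = t) :=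
      (conj_eq_iff (π ω) t (s i)).trans eq_comm
    simp only [hris, List.count_cons, beq_iff_eq, Nat.cast_add, Nat.cast_ite, Nat.cast_one,
      Nat.cast_zero, hiff]
    exact add_comm _ _

/-- Parity of the number of times `t` occurs in the right inversion sequence of any word
for `w`; this is `1` iff `t` is a right inversion of `w`. -/
def einv (w t : W) : ZMod 2 := (phi cs w).fn t

theorem phi_el (w : W) : (phi cs w).el = w := by
  obtain ⟨ω, rfl⟩ := cs.wordProd_surjective w
  rw [phi_wordProd]

theorem phi_eq (w : W) : phi cs w = ⟨w, fun t => einv cs w t⟩ :=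
  DW.ext' (phi_el cs w) (fun _ => rfl)

theorem einv_count (ω : List B) (t : W) :
    einv cs (π ω) t = ((cs.rightInvSeq ω).count t : ZMod 2) := by
  rw [einv, phi_wordProd]

theorem einv_cocycle (v w t : W) :
    einv cs (v * w) t = einv cs v (w * t * w⁻¹) + einv cs w t := by
  have h := map_mul (phi cs) v w
  rw [phi_eq cs v, phi_eq cs w, phi_eq cs (v * w), DW.mul_def] at h
  have h2 := congrArg DW.fn h
  exact congrFun h2 t

theorem einv_one (t : W) : einv cs 1 t = 0 := by
  rw [einv, map_one]
  rfl

theorem einv_inv (w t : W) : einv cs w⁻¹ t = einv cs w (w⁻¹ * t * w) := by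
  have h := einv_cocycle cs w w⁻¹ t
  rw [mul_inv_cancel, einv_one, inv_inv] at h
  exact (zmod2_eq_of_add_eq_zero h.symm).symm

theorem einv_simple_self (i : B) : einv cs (s i) (s i) = 1 := by
  have h := einv_count cs [i] (s i)
  rw [cs.wordProd_singleton, cs.rightInvSeq_singleton] at h
  rw [h, List.count_singleton]
  simp

theorem einv_refl_self {t : W} (ht : cs.IsReflection t) : einv cs t t = 1 := by
  obtain ⟨v, i, rfl⟩ := ht
  have hassoc : v * s i * v⁻¹ = v * (s i * v⁻¹) := by rw [mul_assoc]
  rw [hassoc, einv_cocycle]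
  have h1 : s i * v⁻¹ * (v * (s i * v⁻¹)) * (s i * v⁻¹)⁻¹ = s i := by group
  rw [h1]
  rw [einv_cocycle]
  have h2 : v⁻¹ * (v * (s i * v⁻¹)) * v⁻¹⁻¹ = s i := by group
  rw [h2, einv_simple_self]
  have h3 : einv cs v⁻¹ (v * (s i * v⁻¹)) = einv cs v (s i) := by
    rw [einv_inv]
    congr 1
    group
  rw [h3, add_comm (1 : ZMod 2), ← add_assoc, zmod2_add_self, zero_add]

theorem mem_ris_iff {σ : List B} (hσ : cs.IsReduced σ) (t : W) :
    t ∈ cs.rightInvSeq σ ↔ einv cs (π σ) t = 1 := by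
  rw [einv_count]
  constructor
  · intro h
    rw [List.count_eq_one_of_mem hσ.nodup_rightInvSeq h, Nat.cast_one]
  · intro h
    by_contra hm
    rw [List.count_eq_zero_of_not_mem hm, Nat.cast_zero] at h
    exact absurd h (by decide)

theorem isRightInversion_iff {t : W} (ht : cs.IsReflection t) (w : W) :
    cs.IsRightInversion w t ↔ einv cs w t = 1 := by
  constructor
  · rintro ⟨-, hlt⟩
    have hw : w = (w * t) * t := by rw [mul_assoc, ht.mul_self, mul_one]
    have h1 : einv cs w t = einv cs (w * t) (t * t * t⁻¹) + einv cs t t := by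
      conv_lhs => rw [hw]
      exact einv_cocycle cs (w * t) t t
    have harg : t * t * t⁻¹ = t := by rw [ht.mul_self, one_mul, ht.inv]
    have h0 : einv cs (w * t) t = 0 := by
      rcases zmod2_cases (einv cs (w * t) t) with h | h
      · exact h
      exfalso
      obtain ⟨σ, hσ, hwt⟩ := cs.exists_reduced_word' (w * t)
      rw [hwt] at h
      have hmem := (mem_ris_iff cs hσ t).mpr h
      have hinv := cs.isRightInversion_of_mem_rightInvSeq hσ hmem
      rw [← hwt] at hinv
      have := hinv.2
      rw [mul_assoc, ht.mul_self, mul_one] at this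
      omega
    rw [h1, harg, h0, einv_refl_self cs ht, zero_add]
  · intro h
    obtain ⟨σ, hσ, rfl⟩ := cs.exists_reduced_word' w
    exact cs.isRightInversion_of_mem_rightInvSeq hσ ((mem_ris_iff cs hσ t).mpr h)

/-- The set of right inversions of `w`. -/
def invSet (w : W) : Set W := {t | cs.IsRightInversion w t}

theorem invSet_eq_ris {σ : List B} (hσ : cs.IsReduced σ) :
    invSet cs (π σ) = {t | t ∈ cs.rightInvSeq σ} := by
  ext t
  constructor
  · intro h
    exact (mem_ris_iff cs hσ t).mpr ((isRightInversion_iff cs h.1 _).mp h)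
  · intro h
    exact cs.isRightInversion_of_mem_rightInvSeq hσ h

theorem length_invSet (w : W) : (invSet cs w).Finite ∧ (invSet cs w).ncard = ℓ w := by
  obtain ⟨σ, hσ, rfl⟩ := cs.exists_reduced_word' w
  rw [invSet_eq_ris cs hσ]
  have hset : {t | t ∈ cs.rightInvSeq σ} = ↑(cs.rightInvSeq σ).toFinset := by
    ext t; simp [List.mem_toFinset]
  rw [hset]
  constructor
  · exact (cs.rightInvSeq σ).toFinset.finite_toSet
  rw [Set.ncard_coe_finset, List.toFinset_card_of_nodup hσ.nodup_rightInvSeq,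
    cs.length_rightInvSeq]
  exact hσ.symm

/-- `ω` is a word all of whose letters are simple reflections belonging to `I`. -/
def IsJWord (I : Set W) (ω : List B) : Prop := ∀ i ∈ ω, cs.simple i ∈ I

theorem wordProd_mem_closure {I : Set W} {ω : List B} (h : IsJWord cs I ω) :
    π ω ∈ Subgroup.closure I := by
  induction ω with
  | nil => rw [cs.wordProd_nil]; exact one_mem _
  | cons i ω ih =>
    rw [cs.wordProd_cons]
    exact mul_mem (Subgroup.subset_closure (h i List.mem_cons_self))
      (ih fun j hj => h j (List.mem_cons_of_mem i hj))

theorem exists_jword {I : Set W} (hIs : ∀ t ∈ I, ∃ i, cs.simple i = t) {w : W}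
    (hw : w ∈ Subgroup.closure I) : ∃ ω, IsJWord cs I ω ∧ w = π ω := by
  induction hw using Subgroup.closure_induction with
  | mem x hx =>
    obtain ⟨i, hi⟩ := hIs x hx
    refine ⟨[i], ?_, by rw [cs.wordProd_singleton, hi]⟩
    intro j hj
    rw [List.mem_singleton] at hj
    subst hj
    rw [hi]
    exact hx
  | one => exact ⟨[], fun i hi => absurd hi List.not_mem_nil, (cs.wordProd_nil).symm⟩
  | mul x y hx hy ihx ihy =>
    obtain ⟨ω₁, h₁, rfl⟩ := ihx
    obtain ⟨ω₂, h₂, rfl⟩ := ihy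
    refine ⟨ω₁ ++ ω₂, ?_, (cs.wordProd_append ω₁ ω₂).symm⟩
    intro j hj
    rcases List.mem_append.mp hj with h | h
    · exact h₁ j h
    · exact h₂ j h
  | inv x hx ihx =>
    obtain ⟨ω, h₁, rfl⟩ := ihx
    refine ⟨ω.reverse, ?_, (cs.wordProd_reverse ω).symm⟩
    intro j hj
    exact h₁ j (List.mem_reverse.mp hj)

theorem exists_reduced_jword {I : Set W} (hIs : ∀ t ∈ I, ∃ i, cs.simple i = t) {w : W}
    (hw : w ∈ Subgroup.closure I) :
    ∃ σ, IsJWord cs I σ ∧ cs.IsReduced σ ∧ w = π σ := by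
  obtain ⟨ω, hω, rfl⟩ := exists_jword cs hIs hw
  suffices H : ∀ n (ω : List B), ω.length ≤ n → IsJWord cs I ω →
      ∃ σ, IsJWord cs I σ ∧ cs.IsReduced σ ∧ π σ = π ω by
    obtain ⟨σ, h1, h2, h3⟩ := H ω.length ω le_rfl hω
    exact ⟨σ, h1, h2, h3.symm⟩
  intro n
  induction n with
  | zero =>
    intro ω hlen hJ
    have : ω = [] := List.eq_nil_of_length_eq_zero (Nat.le_zero.mp hlen)
    subst this
    exact ⟨[], fun i hi => absurd hi List.not_mem_nil,
      by show ℓ (π ([] : List B)) = _; rw [cs.wordProd_nil, cs.length_one]; rfl, rfl⟩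
  | succ n ih =>
    intro ω hlen hJ
    rcases ω.eq_nil_or_concat' with rfl | ⟨τ, i, rfl⟩
    · exact ⟨[], fun i hi => absurd hi List.not_mem_nil,
        by show ℓ (π ([] : List B)) = _; rw [cs.wordProd_nil, cs.length_one]; rfl, rfl⟩
    have hτlen : τ.length ≤ n := by
      rw [List.length_append, List.length_singleton] at hlen
      omega
    have hτJ : IsJWord cs I τ := fun j hj => hJ j (List.mem_append_left _ hj)
    obtain ⟨σ, hσJ, hσred, hσeq⟩ := ih τ hτlen hτJ
    have hsiI : s i ∈ I := hJ i (List.mem_append_right _ (List.mem_singleton_self i))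
    have hπ : π (τ ++ [i]) = π σ * s i := by
      rw [cs.wordProd_append, cs.wordProd_singleton, ← hσeq]
    rcases cs.length_mul_simple (π σ) i with hup | hdown
    · refine ⟨σ ++ [i], ?_, ?_, ?_⟩
      · intro j hj
        rcases List.mem_append.mp hj with h | h
        · exact hσJ j h
        · rw [List.mem_singleton] at h; subst h; exact hsiI
      · show ℓ (π (σ ++ [i])) = _
        rw [cs.wordProd_append, cs.wordProd_singleton, hup,
          List.length_append, List.length_singleton]
        rw [hσred]
      · rw [cs.wordProd_append, cs.wordProd_singleton, hπ]
    · -- hdown : ℓ (π σ * s i) + 1 = ℓ (π σ)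
      have hmem : s i ∈ cs.rightInvSeq σ := by
        refine (mem_ris_iff cs hσred _).mpr ?_
        refine (isRightInversion_iff cs (cs.isReflection_simple i) _).mp ?_
        exact ⟨cs.isReflection_simple i, by omega⟩
      obtain ⟨j, hj, hget⟩ := List.getElem_of_mem hmem
      have herase : π σ * s i = π (σ.eraseIdx j) := by
        have h := cs.wordProd_mul_getD_rightInvSeq σ j
        rwa [List.getD_eq_getElem (cs.rightInvSeq σ) 1 hj, hget] at h
      have hJe : IsJWord cs I (σ.eraseIdx j) :=
        fun b hb => hσJ b ((σ.eraseIdx_sublist j).mem hb)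
      have hlen' : (σ.eraseIdx j).length ≤ n := by
        have h1 : σ.length = ℓ (π σ) := hσred.symm
        have h2 : ℓ (π σ) ≤ τ.length := hσeq ▸ cs.length_wordProd_le τ
        have h3 := (σ.eraseIdx_sublist j).length_le
        omega
      obtain ⟨σ', h1, h2, h3⟩ := ih (σ.eraseIdx j) hlen' hJe
      exact ⟨σ', h1, h2, by rw [h3, ← herase, hπ]⟩

theorem ris_mem_closure {I : Set W} {ω : List B} (hJ : IsJWord cs I ω) {t : W}
    (ht : t ∈ cs.rightInvSeq ω) : t ∈ Subgroup.closure I := by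
  obtain ⟨j, hj, rfl⟩ := List.getElem_of_mem ht
  have hj' : j < ω.length := by
    rw [← cs.length_rightInvSeq ω]
    exact hj
  have h := cs.getD_rightInvSeq ω j
  rw [List.getD_eq_getElem (cs.rightInvSeq ω) 1 hj] at h
  rw [h]
  have hget : ω[j]? = some ω[j] := by
    rw [List.getElem?_eq_getElem hj']
  rw [hget]
  have hdropJ : IsJWord cs I (ω.drop (j + 1)) :=
    fun b hb => hJ b (List.mem_of_mem_drop hb)
  have hdropP := wordProd_mem_closure cs hdropJ
  refine mul_mem (mul_mem (inv_mem hdropP) ?_) hdropP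
  show (Option.map cs.simple (some ω[j])).getD 1 ∈ Subgroup.closure I
  rw [Option.map_some, Option.getD_some]
  exact Subgroup.subset_closure (hJ ω[j] (ω.getElem_mem hj'))

end

end

end CoxAux

/-- for `I ∈ S̄`, the `Γ`-fixed points of `W_I` are exactly `{1, wI}`. -/
theorem fixedPoints_parabolic_eq_pair {B W : Type*} [Finite B] [Group W] {M : CoxeterMatrix B}
    (cs : CoxeterSystem M W) (Γ : Subgroup (MulAut W))
    (hΓ : ∀ γ ∈ Γ, ⇑γ '' Set.range cs.simple = Set.range cs.simple)
    (wI : Set W → W)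
    (hwI : ∀ I : Set W, IsFinParabolicOrbit cs Γ I → IsLongestIn cs I (wI I))
    (I : Set W) (hI : IsFinParabolicOrbit cs Γ I) :
    {w : W | w ∈ Subgroup.closure I ∧ ∀ γ ∈ Γ, γ w = w} = {1, wI I} := by
  classical
  obtain ⟨hLP, hLmax⟩ := hwI I hI
  obtain ⟨⟨s₀, hs₀range, hIorb⟩, hfin⟩ := hI
  haveI := hfin
  set L := wI I with hLdef
  -- Γ preserves simples
  have hγS : ∀ γ ∈ Γ, ∀ i : B, ∃ i', γ (cs.simple i) = cs.simple i' := by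
    intro γ hγ i
    have hmem : γ (cs.simple i) ∈ ⇑γ '' Set.range cs.simple := ⟨cs.simple i, ⟨i, rfl⟩, rfl⟩
    rw [hΓ γ hγ] at hmem
    obtain ⟨i', hi'⟩ := hmem
    exact ⟨i', hi'.symm⟩
  -- Γ preserves length
  have hlen_le : ∀ γ ∈ Γ, ∀ w : W, cs.length (γ w) ≤ cs.length w := by
    intro γ hγ w
    obtain ⟨ω, hω, rfl⟩ := cs.exists_reduced_word' w
    rw [hω]
    clear hω
    induction ω with
    | nil => rw [cs.wordProd_nil, map_one, cs.length_one]; exact Nat.zero_le _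
    | cons i ω ih =>
      rw [cs.wordProd_cons, map_mul]
      obtain ⟨i', hi'⟩ := hγS γ hγ i
      rw [hi']
      have h1 : cs.length (cs.simple i' * γ (cs.wordProd ω)) ≤ cs.length (γ (cs.wordProd ω)) + 1 := by
        rcases cs.length_simple_mul (γ (cs.wordProd ω)) i' with h | h <;> omega
      have h2 := ih
      rw [List.length_cons]
      omega
  have hlen : ∀ γ ∈ Γ, ∀ w : W, cs.length (γ w) = cs.length w := by
    intro γ hγ w
    refine le_antisymm (hlen_le γ hγ w) ?_
    have h2 := hlen_le γ⁻¹ (inv_mem hγ) (γ w)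
    have h3 : (γ⁻¹ : MulAut W) (γ w) = w := by
      rw [MulAut.inv_def]
      exact γ.symm_apply_apply w
    rwa [h3] at h2
  -- facts about I
  have hs₀I : s₀ ∈ I := by rw [hIorb]; exact ⟨1, Γ.one_mem, rfl⟩
  have hγI : ∀ γ ∈ Γ, ∀ t ∈ I, γ t ∈ I := by
    intro γ hγ t ht
    rw [hIorb] at ht ⊢
    obtain ⟨γ', hγ', rfl⟩ := ht
    exact ⟨γ * γ', mul_mem hγ hγ', rfl⟩
  have htrans : ∀ t ∈ I, ∀ t' ∈ I, ∃ γ ∈ Γ, γ t = t' := by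
    intro t ht t' ht'
    rw [hIorb] at ht ht'
    obtain ⟨γ₁, hγ₁, rfl⟩ := ht
    obtain ⟨γ₂, hγ₂, rfl⟩ := ht'
    refine ⟨γ₂ * γ₁⁻¹, mul_mem hγ₂ (inv_mem hγ₁), ?_⟩
    rw [MulAut.mul_apply, MulAut.inv_def, γ₁.symm_apply_apply]
  have hIsimple : ∀ t ∈ I, ∃ i, cs.simple i = t := by
    intro t ht
    rw [hIorb] at ht
    obtain ⟨γ, hγ, rfl⟩ := ht
    have hmem : γ s₀ ∈ ⇑γ '' Set.range cs.simple := ⟨s₀, hs₀range, rfl⟩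
    rw [hΓ γ hγ] at hmem
    exact hmem
  have hγP : ∀ γ ∈ Γ, ∀ u ∈ Subgroup.closure I, γ u ∈ Subgroup.closure I := by
    intro γ hγ u hu
    induction hu using Subgroup.closure_induction with
    | mem x hx => exact Subgroup.subset_closure (hγI γ hγ x hx)
    | one => rw [map_one]; exact one_mem _
    | mul x y hx hy ihx ihy => rw [map_mul]; exact mul_mem ihx ihy
    | inv x hx ihx => rw [map_inv]; exact inv_mem ihx
  -- the set of reflections of the parabolic subgroup
  set TI : Set W := {t | cs.IsReflection t ∧ t ∈ Subgroup.closure I} with hTIdef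
  have hTIfin : TI.Finite := by
    have h1 : ((Subgroup.closure I : Subgroup W) : Set W).Finite := Set.toFinite _
    exact h1.subset fun t ht => ht.2
  have hinvTI : ∀ u ∈ Subgroup.closure I, CoxAux.invSet cs u ⊆ TI := by
    intro u hu t ht
    obtain ⟨σ, hJ, hred, rfl⟩ := CoxAux.exists_reduced_jword cs hIsimple hu
    rw [CoxAux.invSet_eq_ris cs hred] at ht
    exact ⟨cs.isReflection_of_mem_rightInvSeq σ ht, CoxAux.ris_mem_closure cs hJ ht⟩
  have hTIL : CoxAux.invSet cs L = TI := by
    apply subset_antisymm (hinvTI L hLP)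
    rintro t ⟨hrefl, htP⟩
    exact ⟨hrefl, lt_of_le_of_ne (hLmax (L * t) (mul_mem hLP htP)) (hrefl.length_mul_left_ne L)⟩
  have heinvL : ∀ t ∈ TI, CoxAux.einv cs L t = 1 := by
    intro t ht
    have ht' : t ∈ CoxAux.invSet cs L := by rw [hTIL]; exact ht
    exact (CoxAux.isRightInversion_iff cs ht.1 L).mp ht' 
  -- the key length formula
  have hkey : ∀ u ∈ Subgroup.closure I, cs.length (u * L) + cs.length u = cs.length L := by
    intro u hu
    have huL : u * L ∈ Subgroup.closure I := mul_mem hu hLP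
    have hsubu : CoxAux.invSet cs u ⊆ TI := hinvTI u hu
    have himg : (fun t => L⁻¹ * t * L) '' CoxAux.invSet cs u ⊆ TI := by
      rintro _ ⟨r, hr, rfl⟩
      have hrTI := hsubu hr
      constructor
      · have h := hrTI.1.conj L⁻¹
        rwa [inv_inv] at h
      · exact mul_mem (mul_mem (inv_mem hLP) hrTI.2) hLP
    have hset : CoxAux.invSet cs (u * L) = TI \ ((fun t => L⁻¹ * t * L) '' CoxAux.invSet cs u) := by
      ext t
      constructor
      · intro ht
        have htTI : t ∈ TI := hinvTI _ huL ht
        have h1 : CoxAux.einv cs (u * L) t = 1 :=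
          (CoxAux.isRightInversion_iff cs ht.1 _).mp ht
        rw [CoxAux.einv_cocycle, heinvL t htTI] at h1
        have h0 : CoxAux.einv cs u (L * t * L⁻¹) = 0 := by
          rcases CoxAux.zmod2_cases (CoxAux.einv cs u (L * t * L⁻¹)) with h | h
          · exact h
          · rw [h] at h1; exact absurd h1 (by decide)
        refine ⟨htTI, ?_⟩
        rintro ⟨r, hr, hre⟩
        have hLtL : L * t * L⁻¹ = r := by rw [← hre]; group
        have : CoxAux.einv cs u (L * t * L⁻¹) = 1 := by
          rw [hLtL]
          exact (CoxAux.isRightInversion_iff cs (hsubu hr).1 u).mp hr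
        rw [this] at h0
        exact absurd h0 (by decide)
      · rintro ⟨htTI, htnot⟩
        refine (CoxAux.isRightInversion_iff cs htTI.1 _).mpr ?_
        rw [CoxAux.einv_cocycle, heinvL t htTI]
        have h0 : CoxAux.einv cs u (L * t * L⁻¹) = 0 := by
          rcases CoxAux.zmod2_cases (CoxAux.einv cs u (L * t * L⁻¹)) with h | h
          · exact h
          exfalso
          have hreflc : cs.IsReflection (L * t * L⁻¹) := htTI.1.conj L
          have hinv : L * t * L⁻¹ ∈ CoxAux.invSet cs u :=
            (CoxAux.isRightInversion_iff cs hreflc u).mpr h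
          exact htnot ⟨L * t * L⁻¹, hinv, by group⟩
        rw [h0, zero_add]
    obtain ⟨hufin, hucard⟩ := CoxAux.length_invSet cs u
    obtain ⟨hulfin, hulcard⟩ := CoxAux.length_invSet cs (u * L)
    obtain ⟨hLfin, hLcard⟩ := CoxAux.length_invSet cs L
    have hinj : Function.Injective (fun t : W => L⁻¹ * t * L) := by
      intro a b h
      simp only at h
      have := mul_right_cancel h
      exact mul_left_cancel this
    calc cs.length (u * L) + cs.length u
        = (TI \ ((fun t => L⁻¹ * t * L) '' CoxAux.invSet cs u)).ncard
          + ((fun t => L⁻¹ * t * L) '' CoxAux.invSet cs u).ncard := by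
          rw [← hulcard, hset, Set.ncard_image_of_injective _ hinj, hucard]
      _ = TI.ncard := Set.ncard_diff_add_ncard_of_subset himg hTIfin
      _ = cs.length L := by rw [← hTIL, hLcard]
  -- consequences of the key formula
  have hLL : L * L = 1 := by
    have h := hkey L hLP
    have h0 : cs.length (L * L) = 0 := by omega
    exact cs.length_eq_zero_iff.mp h0
  have hLinv : L⁻¹ = L := inv_eq_of_mul_eq_one_right hLL
  have hmax_unique : ∀ u ∈ Subgroup.closure I, cs.length L ≤ cs.length u → u = L := by
    intro u hu hle
    have h := hkey u hu
    have hum := hLmax u hu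
    have h0 : cs.length (u * L) = 0 := by omega
    have h1 : u * L = 1 := cs.length_eq_zero_iff.mp h0
    have h2 : u = L⁻¹ := eq_inv_of_mul_eq_one_left h1
    rw [h2, hLinv]
  have hγL : ∀ γ ∈ Γ, γ L = L := fun γ hγ =>
    hmax_unique (γ L) (hγP γ hγ L hLP) (by rw [hlen γ hγ L])
  -- descent lemmas
  have hIinv : ∀ t ∈ I, t * t = 1 := by
    intro t ht
    obtain ⟨i, hi⟩ := hIsimple t ht
    rw [← hi]
    exact cs.simple_mul_simple_self i
  have hdescR : ∀ w ∈ Subgroup.closure I, (∀ γ ∈ Γ, γ w = w) → w ≠ 1 →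
      ∀ t ∈ I, cs.length (w * t) < cs.length w := by
    intro w hwP hfix hne
    obtain ⟨σ, hJ, hred, rfl⟩ := CoxAux.exists_reduced_jword cs hIsimple hwP
    have hσne : σ ≠ [] := by
      rintro rfl
      rw [cs.wordProd_nil] at hne
      exact hne rfl
    obtain ⟨τ, i, rfl⟩ : ∃ τ i, σ = τ ++ [i] := by
      rcases σ.eq_nil_or_concat' with h | h
      · exact absurd h hσne
      · exact h
    have ht₀I : cs.simple i ∈ I := hJ i (List.mem_append_right _ (List.mem_singleton_self i))
    have hdesc₀ : cs.length (cs.wordProd (τ ++ [i]) * cs.simple i)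
        < cs.length (cs.wordProd (τ ++ [i])) := by
      have hstep : cs.wordProd (τ ++ [i]) * cs.simple i = cs.wordProd τ := by
        rw [cs.wordProd_append, cs.wordProd_singleton, mul_assoc, cs.simple_mul_simple_self,
          mul_one]
      rw [hstep]
      have h1 : cs.length (cs.wordProd τ) ≤ τ.length := cs.length_wordProd_le τ
      have h2 : cs.length (cs.wordProd (τ ++ [i])) = τ.length + 1 := by
        rw [hred, List.length_append, List.length_singleton]
      omega
    intro t ht
    obtain ⟨γ, hγ, hγt⟩ := htrans (cs.simple i) ht₀I t ht
    calc cs.length (cs.wordProd (τ ++ [i]) * t)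
        = cs.length (γ (cs.wordProd (τ ++ [i]) * cs.simple i)) := by
          rw [map_mul, hfix γ hγ, hγt]
      _ = cs.length (cs.wordProd (τ ++ [i]) * cs.simple i) := hlen γ hγ _
      _ < _ := hdesc₀
  have hdescL : ∀ w ∈ Subgroup.closure I, (∀ γ ∈ Γ, γ w = w) → w ≠ 1 →
      ∀ t ∈ I, cs.length (t * w) < cs.length w := by
    intro w hwP hfix hne t ht
    have h1 := hdescR w⁻¹ (inv_mem hwP) (fun γ hγ => by rw [map_inv, hfix γ hγ])
      (fun h => hne (by rwa [inv_eq_one] at h)) t ht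
    have htinv : t⁻¹ = t := inv_eq_of_mul_eq_one_right (hIinv t ht)
    calc cs.length (t * w) = cs.length ((t * w)⁻¹) := (cs.length_inv _).symm
      _ = cs.length (w⁻¹ * t) := by rw [mul_inv_rev, htinv]
      _ < cs.length w⁻¹ := h1
      _ = cs.length w := cs.length_inv w
  -- the main argument
  ext w
  simp only [Set.mem_setOf_eq, Set.mem_insert_iff, Set.mem_singleton_iff]
  constructor
  · rintro ⟨hwP, hfix⟩
    by_cases h1 : w = 1
    · exact Or.inl h1
    right
    by_cases hy : w * L = 1
    · have h2 : w = L⁻¹ := eq_inv_of_mul_eq_one_left hy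
      rw [h2, hLinv]
    exfalso
    have hyP : w * L ∈ Subgroup.closure I := mul_mem hwP hLP
    have hyfix : ∀ γ ∈ Γ, γ (w * L) = w * L := fun γ hγ => by
      rw [map_mul, hfix γ hγ, hγL γ hγ]
    have hsum := hkey w hwP
    have hdw := hdescL w hwP hfix h1 s₀ hs₀I
    have hdy := hdescL (w * L) hyP hyfix hy s₀ hs₀I
    have hs₀inv : s₀⁻¹ = s₀ := inv_eq_of_mul_eq_one_right (hIinv s₀ hs₀I)
    have hLdecomp : L = (w⁻¹ * s₀) * (s₀ * (w * L)) := by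
      have hss : s₀ * s₀ = 1 := hIinv s₀ hs₀I
      calc L = w⁻¹ * (s₀ * s₀) * (w * L) := by rw [hss]; group
        _ = (w⁻¹ * s₀) * (s₀ * (w * L)) := by group
    have hle : cs.length L ≤ cs.length (w⁻¹ * s₀) + cs.length (s₀ * (w * L)) := by
      conv_lhs => rw [hLdecomp]
      exact cs.length_mul_le _ _
    have h3 : cs.length (w⁻¹ * s₀) = cs.length (s₀ * w) := by
      rw [← cs.length_inv (w⁻¹ * s₀), mul_inv_rev, inv_inv, hs₀inv]
    omega
  · rintro (rfl | rfl)
    · exact ⟨one_mem _, fun γ _ => map_one γ⟩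
    · exact ⟨hLP, fun γ hγ => hγL γ hγ⟩
end

section
/- Let I, J ∈ S̄ with I ≠ J and set K := I ∪ J. Then the group of Γ-fixed points W_K^Γ of the parabolic subgroup W_K equals the subgroup generated by the two involutions w_I and w_J; in particular W_K^Γ is a dihedral group. -/
open CoxeterSystem

open CoxeterSystem List
set_option linter.unusedSectionVars false
set_option maxHeartbeats 1000000

namespace StmtAux

variable {B W : Type*} [Group W] [DecidableEq W] {M : CoxeterMatrix B} (cs : CoxeterSystem M W)

local prefix:100 "s" => cs.simple
local prefix:100 "π" => cs.wordProd
local prefix:100 "ℓ" => cs.length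
local prefix:100 "ris" => cs.rightInvSeq

lemma two_mul_zmod : ∀ c : ZMod 2, c + c = 0 := by decide

lemma conj_simple_eq_simple_iff (i : B) (w : W) : s i * w * s i = s i ↔ w = s i := by
  constructor
  · intro h
    calc w = s i * (s i * w * s i) * s i := by
            rw [show s i * (s i * w * s i) * s i = (s i * s i) * w * (s i * s i) by group,
              cs.simple_mul_simple_self, one_mul, mul_one]
      _ = s i * s i * s i := by rw [h]
      _ = s i := by rw [cs.simple_mul_simple_self, one_mul]
  · rintro rfl
    rw [cs.simple_mul_simple_self, one_mul]

/-- Tits' permutation representation step. -/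
def step (i : B) : Equiv.Perm (W × ZMod 2) where
  toFun p := (s i * p.1 * s i, p.2 + if p.1 = s i then 1 else 0)
  invFun p := (s i * p.1 * s i, p.2 + if p.1 = s i then 1 else 0)
  left_inv p := by
    obtain ⟨w, z⟩ := p
    simp only [conj_simple_eq_simple_iff]
    have h1 : s i * (s i * w * s i) * s i = w := by
      rw [show s i * (s i * w * s i) * s i = (s i * s i) * w * (s i * s i) by group,
        cs.simple_mul_simple_self, one_mul, mul_one]
    rw [h1]
    ext
    · rfl
    · simp only
      rw [add_assoc, two_mul_zmod _, add_zero]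
  right_inv p := by
    obtain ⟨w, z⟩ := p
    simp only [conj_simple_eq_simple_iff]
    have h1 : s i * (s i * w * s i) * s i = w := by
      rw [show s i * (s i * w * s i) * s i = (s i * s i) * w * (s i * s i) by group,
        cs.simple_mul_simple_self, one_mul, mul_one]
    rw [h1]
    ext
    · rfl
    · simp only
      rw [add_assoc, two_mul_zmod _, add_zero]

def prodStep (ω : List B) : Equiv.Perm (W × ZMod 2) := (ω.map (step cs)).prod

@[simp] lemma prodStep_nil : prodStep cs ([] : List B) = 1 := rfl

lemma prodStep_cons (i : B) (ω : List B) :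
    prodStep cs (i :: ω) = step cs i * prodStep cs ω := by
  simp [prodStep]

lemma prodStep_apply (ω : List B) (w : W) (z : ZMod 2) :
    prodStep cs ω (w, z) = (π ω * w * (π ω)⁻¹, z + ((ris ω).count w : ZMod 2)) := by
  induction ω generalizing z with
  | nil => simp
  | cons i ω ih =>
    rw [prodStep_cons, Equiv.Perm.mul_apply, ih]
    show step cs i _ = _
    rw [step]
    simp only [Equiv.coe_fn_mk, rightInvSeq]
    simp only [Prod.mk.injEq]
    have hcond : (π ω * w * (π ω)⁻¹ = s i) ↔ ((π ω)⁻¹ * s i * π ω = w) := by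
      constructor
      · rintro h
        rw [← h]; group
      · rintro rfl; group
    constructor
    · rw [cs.wordProd_cons, mul_inv_rev, cs.inv_simple]
      group
    · simp only [List.count_cons, beq_iff_eq]
      by_cases h : (π ω)⁻¹ * s i * π ω = w
      · rw [if_pos (hcond.mpr h), if_pos h]
        push_cast; ring
      · rw [if_neg (fun hh => h (hcond.mp hh)), if_neg h]
        push_cast; ring


lemma alternatingWord_two_mul_succ (i j : B) (m : ℕ) :
    alternatingWord i j (2 * (m+1)) = i :: j :: alternatingWord i j (2 * m) := by
  rw [show 2*(m+1) = (2*m+1)+1 by ring, alternatingWord_succ', alternatingWord_succ']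
  simp [Nat.even_add_one]

lemma pow_step (i j : B) (m : ℕ) :
    (step cs i * step cs j) ^ m = prodStep cs (alternatingWord i j (2*m)) := by
  induction m with
  | zero => simp [alternatingWord]
  | succ m ih =>
    rw [pow_succ', alternatingWord_two_mul_succ, prodStep_cons, prodStep_cons, ih, mul_assoc]

lemma prod_alt_even (i j : B) (a : ℕ) :
    π (alternatingWord i j (2*a)) = (s i * s j)^a := by
  rw [cs.prod_alternatingWord_eq_mul_pow]
  rw [if_pos (even_two_mul a), Nat.mul_div_cancel_left a (by norm_num), one_mul]

lemma prod_alt_odd (i j : B) (a : ℕ) :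
    π (alternatingWord i j (2*a+1)) = s j * (s i * s j)^a := by
  rw [cs.prod_alternatingWord_eq_mul_pow]
  rw [if_neg (by simp [Nat.even_add_one, parity_simps]), show (2*a+1)/2 = a by omega]

lemma simple_conj_pow (i j : B) (c : ℕ) :
    s j * (s i * s j)^c = ((s i * s j)^c)⁻¹ * s j := by
  have hstep : s j * (s i * s j) = (s i * s j)⁻¹ * s j := by
    rw [mul_inv_rev, cs.inv_simple, cs.inv_simple, mul_assoc]
  induction c with
  | zero => simp
  | succ c ih =>
    calc s j * (s i * s j) ^ (c+1)
        = (s j * (s i * s j) ^ c) * (s i * s j) := by rw [pow_succ, ← mul_assoc]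
      _ = ((s i * s j) ^ c)⁻¹ * (s j * (s i * s j)) := by rw [ih, mul_assoc]
      _ = ((s i * s j) ^ c)⁻¹ * ((s i * s j)⁻¹ * s j) := by rw [hstep]
      _ = ((s i * s j) ^ (c+1))⁻¹ * s j := by rw [← mul_assoc, ← mul_inv_rev, ← pow_succ']

/-- The reflection `G q` appearing at the corresponding position of
any right inversion sequence of an alternating word. -/
def Gfun (i j : B) (q : ℕ) : W :=
  (π (alternatingWord i j q))⁻¹ * π (alternatingWord i j (q+1))

lemma Gfun_eq (i j : B) (q : ℕ) : Gfun cs i j q = ((s i * s j)^q)⁻¹ * s j := by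
  rcases Nat.even_or_odd q with ⟨a, rfl⟩ | ⟨a, rfl⟩
  · rw [show a + a = 2*a by ring, Gfun, prod_alt_even, prod_alt_odd, simple_conj_pow,
      show 2*a = a + a by ring, pow_add, mul_inv_rev]
    group
  · rw [Gfun, show 2*a+1+1 = 2*(a+1) by ring, prod_alt_even, prod_alt_odd, mul_inv_rev,
      cs.inv_simple, mul_assoc, simple_conj_pow,
      show 2*a+1 = a + (a+1) by ring, pow_add, mul_inv_rev]
    group

lemma Gfun_add_M (i j : B) (q : ℕ) : Gfun cs i j (q + M i j) = Gfun cs i j q := by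
  rw [Gfun_eq, Gfun_eq, pow_add, cs.simple_mul_simple_pow, mul_one]

lemma alternatingWord_drop (i j : B) : ∀ (r n : ℕ),
    (alternatingWord i j n).drop r = alternatingWord i j (n - r) := by
  intro r
  induction r with
  | zero => simp
  | succ r ih =>
    intro n
    cases n with
    | zero => simp [alternatingWord]
    | succ n =>
      rw [alternatingWord_succ', List.drop_succ_cons, ih n]
      congr 1
      omega

lemma ris_alt_getD (i j : B) (n k : ℕ) (hk : k < n) :
    (ris (alternatingWord i j n)).getD k 1 = Gfun cs i j (n - k - 1) := by
  set q := n - k - 1 with hq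
  have h1 : n - (k+1) = q := by omega
  have h2 : n - k = q + 1 := by omega
  have hd : (alternatingWord i j n).drop (k+1) = alternatingWord i j q := by
    rw [alternatingWord_drop, h1]
  have hget : (alternatingWord i j n)[k]? = some (if Even q then j else i) := by
    rw [← List.head?_drop, alternatingWord_drop, h2,
      alternatingWord_succ', List.head?_cons]
  rw [cs.getD_rightInvSeq, hget, hd]
  simp only [Option.map_some, Option.getD_some]
  have hw : π (alternatingWord i j (q+1)) =
      cs.simple (if Even q then j else i) * π (alternatingWord i j q) := by
    rw [alternatingWord_succ', cs.wordProd_cons]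
  rw [Gfun, hw]
  group

lemma count_ris_alt_even (i j : B) (w : W) :
    Even ((ris (alternatingWord i j (2 * M i j))).count w) := by
  set l := ris (alternatingWord i j (2 * M i j)) with hl
  have hlen : l.length = 2 * M i j := by
    rw [hl, cs.length_rightInvSeq, length_alternatingWord]
  have htd : l.take (M i j) = l.drop (M i j) := by
    apply List.ext_getElem
    · rw [List.length_take, List.length_drop, hlen]; omega
    · intro k h1 h2
      rw [List.length_take, hlen] at h1
      have hk : k < M i j := by omega
      rw [List.getElem_take, List.getElem_drop]
      rw [← List.getD_eq_getElem l 1, ← List.getD_eq_getElem l 1]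
      rw [hl, ris_alt_getD cs i j _ _ (by omega), ris_alt_getD cs i j _ _ (by omega)]
      rw [show 2 * M i j - k - 1 = (2 * M i j - (M i j + k) - 1) + M i j by omega,
        Gfun_add_M]
  have hsplit : l = l.take (M i j) ++ l.drop (M i j) := (List.take_append_drop _ _).symm
  rw [hsplit, List.count_append, ← htd]
  exact ⟨_, rfl⟩

theorem step_liftable : M.IsLiftable (step cs) := by
  intro i j
  apply Equiv.ext
  rintro ⟨w, z⟩
  rw [pow_step, prodStep_apply]
  have hpi : π (alternatingWord i j (2 * M i j)) = 1 := by
    rw [prod_alt_even, cs.simple_mul_simple_pow]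
  rw [hpi]
  obtain ⟨c, hc⟩ := count_ris_alt_even cs i j w
  rw [hc]
  push_cast
  rw [two_mul_zmod]
  simp

noncomputable def Phi : W →* Equiv.Perm (W × ZMod 2) :=
  cs.lift ⟨step cs, step_liftable cs⟩

lemma Phi_simple (i : B) : Phi cs (s i) = step cs i :=
  cs.lift_apply_simple (step_liftable cs) i

lemma Phi_wordProd (ω : List B) : Phi cs (π ω) = prodStep cs ω := by
  induction ω with
  | nil => simp [prodStep]
  | cons i ω ih => rw [cs.wordProd_cons, map_mul, Phi_simple, prodStep_cons, ih]

/-- The parity of the number of occurrences of `t` in the right inversion sequence of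
any word for `w`. -/
noncomputable def eta (w t : W) : ZMod 2 := ((Phi cs w) (t, 0)).2

lemma eta_eq_count (ω : List B) (t : W) : eta cs (π ω) t = ((ris ω).count t : ZMod 2) := by
  rw [eta, Phi_wordProd, prodStep_apply, zero_add]

lemma Phi_apply (w t : W) (z : ZMod 2) : Phi cs w (t, z) = (w * t * w⁻¹, z + eta cs w t) := by
  obtain ⟨ω, rfl⟩ := cs.wordProd_surjective w
  rw [Phi_wordProd, prodStep_apply, eta_eq_count]

lemma eta_mul (u v t : W) : eta cs (u * v) t = eta cs v t + eta cs u (v * t * v⁻¹) := by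
  unfold eta
  rw [map_mul]
  show ((Phi cs u) ((Phi cs v) (t, 0))).2 = _
  rw [Phi_apply cs v t 0, zero_add, Phi_apply cs u (v * t * v⁻¹) (eta cs v t),
    Phi_apply cs u (v * t * v⁻¹) 0, zero_add]

lemma eta_one (t : W) : eta cs 1 t = 0 := by
  unfold eta
  rw [map_one]
  rfl

lemma eta_inv (u t : W) : eta cs u⁻¹ t = eta cs u (u⁻¹ * t * u) := by
  have h := eta_mul cs u u⁻¹ t
  rw [mul_inv_cancel, eta_one, inv_inv] at h
  have h2 : ∀ a b : ZMod 2, 0 = a + b → a = b := by decide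
  exact h2 _ _ h

lemma eta_simple (i : B) (t : W) : eta cs (s i) t = if t = s i then 1 else 0 := by
  rw [eta, Phi_simple]
  show (step cs i (t, 0)).2 = _
  rw [step]
  simp

lemma eta_reflection_self {t : W} (ht : cs.IsReflection t) : eta cs t t = 1 := by
  obtain ⟨u, i, rfl⟩ := ht
  have hconj : u⁻¹ * (u * s i * u⁻¹) * u = s i := by group
  have h1 : eta cs (u * s i * u⁻¹) (u * s i * u⁻¹)
      = eta cs (s i * u⁻¹) (u * s i * u⁻¹) + eta cs u (s i) := by
    have h := eta_mul cs u (s i * u⁻¹) (u * s i * u⁻¹)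
    rw [← mul_assoc] at h
    rw [h]
    congr 1
    have : s i * u⁻¹ * (u * s i * u⁻¹) * (s i * u⁻¹)⁻¹ = s i := by
      rw [mul_inv_rev, inv_inv, cs.inv_simple]
      have hs : s i * s i = 1 := cs.simple_mul_simple_self i
      calc s i * u⁻¹ * (u * s i * u⁻¹) * (u * s i)
          = s i * (u⁻¹ * u) * s i * (u⁻¹ * u) * s i := by group
        _ = s i := by rw [inv_mul_cancel, mul_one, mul_one, mul_assoc, hs, mul_one]
          
    rw [this]
  have h2 : eta cs (s i * u⁻¹) (u * s i * u⁻¹)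
      = eta cs u⁻¹ (u * s i * u⁻¹) + 1 := by
    have h := eta_mul cs (s i) u⁻¹ (u * s i * u⁻¹)
    rw [inv_inv] at h
    rw [h, hconj, eta_simple, if_pos rfl]
  have h3 : eta cs u⁻¹ (u * s i * u⁻¹) = eta cs u (s i) := by
    rw [eta_inv, hconj]
  rw [h1, h2, h3]
  exact (by decide : ∀ a : ZMod 2, a + 1 + a = 1) _

lemma isRightInversion_of_eta_eq_one {w t : W} (h : eta cs w t = 1) :
    cs.IsRightInversion w t := by
  obtain ⟨ω, hred, hw⟩ := cs.exists_reduced_word' w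
  subst hw
  rw [eta_eq_count] at h
  have hmem : t ∈ ris ω := by
    by_contra hmem
    rw [List.count_eq_zero_of_not_mem hmem] at h
    exact absurd h (by decide)
  exact cs.isRightInversion_of_mem_rightInvSeq hred hmem

lemma eta_eq_one_of_isRightInversion {w t : W} (h : cs.IsRightInversion w t) :
    eta cs w t = 1 := by
  have ht : cs.IsReflection t := h.1
  rcases (by decide : ∀ a : ZMod 2, a = 0 ∨ a = 1) (eta cs w t) with h0 | h1
  · exfalso
    have hwt : eta cs (w * t) t = 1 := by
      rw [eta_mul, eta_reflection_self cs ht]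
      have : t * t * t⁻¹ = t := by rw [ht.mul_self, one_mul, ht.inv]
      rw [this, h0, add_zero]
    have hlt := (isRightInversion_of_eta_eq_one cs hwt).2
    rw [mul_assoc, ht.mul_self, mul_one] at hlt
    have := h.2
    omega
  · exact h1

lemma eta_eq_one_iff {w t : W} (ht : cs.IsReflection t) :
    eta cs w t = 1 ↔ cs.IsRightInversion w t :=
  ⟨isRightInversion_of_eta_eq_one cs, eta_eq_one_of_isRightInversion cs⟩

/-- Strong exchange: any right inversion appears in the right inversion sequence of
any word (reduced or not). -/
lemma mem_rightInvSeq_of_isRightInversion {ω : List B} {t : W}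
    (h : cs.IsRightInversion (π ω) t) : t ∈ ris ω := by
  have h1 : eta cs (π ω) t = 1 := eta_eq_one_of_isRightInversion cs h
  rw [eta_eq_count] at h1
  by_contra hmem
  rw [List.count_eq_zero_of_not_mem hmem] at h1
  exact absurd h1 (by decide)

lemma isReduced_nil : cs.IsReduced ([] : List B) := by
  simp [CoxeterSystem.IsReduced]

lemma mem_closure_simples_iff (X : Set B) (w : W) :
    w ∈ Subgroup.closure (cs.simple '' X) ↔ ∃ ω : List B, (∀ i ∈ ω, i ∈ X) ∧ π ω = w := by
  constructor
  · intro hw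
    induction hw using Subgroup.closure_induction with
    | mem g hg =>
      obtain ⟨i, hi, rfl⟩ := hg
      exact ⟨[i], by simpa using hi, by simp⟩
    | one => exact ⟨[], by simp, by simp⟩
    | mul a b ha hb iha ihb =>
      obtain ⟨ω₁, h1, rfl⟩ := iha
      obtain ⟨ω₂, h2, rfl⟩ := ihb
      refine ⟨ω₁ ++ ω₂, ?_, cs.wordProd_append ω₁ ω₂⟩
      intro i hi
      rcases List.mem_append.mp hi with h | h
      exacts [h1 i h, h2 i h]
    | inv a ha iha =>
      obtain ⟨ω, h1, rfl⟩ := iha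
      exact ⟨ω.reverse, fun i hi => h1 i (List.mem_reverse.mp hi), cs.wordProd_reverse ω⟩
  · rintro ⟨ω, hmem, rfl⟩
    induction ω with
    | nil => simpa using Subgroup.one_mem _
    | cons i ω ih =>
      rw [cs.wordProd_cons]
      exact Subgroup.mul_mem _
        (Subgroup.subset_closure ⟨i, hmem i List.mem_cons_self, rfl⟩)
        (ih fun j hj => hmem j (List.mem_cons_of_mem _ hj))

lemma exists_reduced_word_subset_aux (X : Set B) :
    ∀ n (ω : List B), ω.length ≤ n → (∀ i ∈ ω, i ∈ X) →
    ∃ ω', cs.IsReduced ω' ∧ (∀ i ∈ ω', i ∈ X) ∧ π ω' = π ω := by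
  intro n
  induction n with
  | zero =>
    intro ω h hm
    rw [Nat.le_zero, List.length_eq_zero_iff] at h
    subst h
    exact ⟨[], isReduced_nil cs, by simp, rfl⟩
  | succ n ih =>
    intro ω hlen hm
    by_cases hred : cs.IsReduced ω
    · exact ⟨ω, hred, hm, rfl⟩
    rcases List.eq_nil_or_concat ω with rfl | ⟨ω₁, i, rfl⟩
    · exact absurd (isReduced_nil cs) hred
    have hm1 : ∀ j ∈ ω₁, j ∈ X := fun j hj => hm j (by simp [hj])
    have hi : i ∈ X := hm i (by simp)
    have hlen1 : ω₁.length ≤ n := by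
      rw [List.length_concat] at hlen; omega
    obtain ⟨ω₂, hred2, hm2, hprod2⟩ := ih ω₁ hlen1 hm1
    by_cases hred3 : cs.IsReduced (ω₂.concat i)
    · refine ⟨ω₂.concat i, hred3, ?_, ?_⟩
      · intro j hj
        rw [List.concat_eq_append, List.mem_append] at hj
        rcases hj with hj | hj
        · exact hm2 j hj
        · simp at hj; subst hj; exact hi
      · rw [cs.wordProd_concat, hprod2, ← cs.wordProd_concat]
    · have hinv : cs.IsRightInversion (π ω₂) (s i) := by
        refine ⟨cs.isReflection_simple i, ?_⟩
        rcases cs.length_mul_simple (π ω₂) i with h | h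
        · exfalso
          apply hred3
          unfold CoxeterSystem.IsReduced
          rw [cs.wordProd_concat, h, List.length_concat, hred2]
        · omega
      have hmem4 := mem_rightInvSeq_of_isRightInversion cs hinv
      obtain ⟨j, hj, hgt⟩ := List.mem_iff_getElem.mp hmem4
      rw [cs.length_rightInvSeq] at hj
      have herase : π ω₂ * s i = π (ω₂.eraseIdx j) := by
        rw [← cs.wordProd_mul_getD_rightInvSeq,
          List.getD_eq_getElem _ 1 (by rw [cs.length_rightInvSeq]; exact hj), hgt]
      have hlen2 : (ω₂.eraseIdx j).length ≤ n := by
        have h1 : ω₂.length = ℓ (π ω₁) := by rw [← hprod2]; exact hred2.symm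
        have h3 : ℓ (π ω₁) ≤ ω₁.length := cs.length_wordProd_le ω₁
        have h4 := List.length_eraseIdx_add_one (l := ω₂) (i := j) hj
        omega
      obtain ⟨ω₃, hr3, hm3, hp3⟩ := ih (ω₂.eraseIdx j) hlen2
        (fun k hk => hm2 k ((List.eraseIdx_sublist ω₂ j).subset hk))
      exact ⟨ω₃, hr3, hm3, by rw [hp3, ← herase, cs.wordProd_concat, hprod2]⟩

lemma exists_reduced_word_subset {X : Set B} {w : W}
    (hw : w ∈ Subgroup.closure (cs.simple '' X)) :
    ∃ ω, cs.IsReduced ω ∧ (∀ i ∈ ω, i ∈ X) ∧ π ω = w := by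
  obtain ⟨ω, hmem, rfl⟩ := (mem_closure_simples_iff cs X w).mp hw
  exact exists_reduced_word_subset_aux cs X ω.length ω le_rfl hmem

/-- The set of right inversions of `w`. -/
def Invs (w : W) : Set W := {t | cs.IsRightInversion w t}

lemma invs_eq_of_reduced {ω : List B} (hred : cs.IsReduced ω) :
    Invs cs (π ω) = {t | t ∈ ris ω} := by
  ext t
  exact ⟨fun h => mem_rightInvSeq_of_isRightInversion cs h,
    fun h => cs.isRightInversion_of_mem_rightInvSeq hred h⟩

lemma length_eq_ncard_invs (w : W) : ℓ w = (Invs cs w).ncard := by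
  obtain ⟨ω, hred, hw⟩ := cs.exists_reduced_word' w
  subst hw
  rw [invs_eq_of_reduced cs hred]
  have h1 : {t | t ∈ ris ω} = ↑(ris ω).toFinset := by
    ext t; simp
  rw [h1, Set.ncard_coe_finset, List.toFinset_card_of_nodup hred.nodup_rightInvSeq,
    cs.length_rightInvSeq, hred]

lemma invs_finite (w : W) : (Invs cs w).Finite := by
  obtain ⟨ω, hred, hw⟩ := cs.exists_reduced_word' w
  subst hw
  rw [invs_eq_of_reduced cs hred]
  have h1 : {t | t ∈ ris ω} = ↑(ris ω).toFinset := by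
    ext t; simp
  rw [h1]
  exact (ris ω).toFinset.finite_toSet

lemma rightInvSeq_mem_closure {X : Set B} {ω : List B} (hmem : ∀ i ∈ ω, i ∈ X) {t : W}
    (ht : t ∈ ris ω) : t ∈ Subgroup.closure (cs.simple '' X) := by
  obtain ⟨j, hj, rfl⟩ := List.mem_iff_getElem.mp ht
  rw [← List.getD_eq_getElem _ 1 hj, cs.getD_rightInvSeq]
  rw [cs.length_rightInvSeq] at hj
  have hdrop : π (ω.drop (j+1)) ∈ Subgroup.closure (cs.simple '' X) := by
    rw [mem_closure_simples_iff]
    exact ⟨ω.drop (j+1), fun k hk => hmem k ((List.drop_subset _ _) hk), rfl⟩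
  have hget : (Option.map cs.simple ω[j]?).getD 1 ∈ Subgroup.closure (cs.simple '' X) := by
    rw [List.getElem?_eq_getElem hj]
    exact Subgroup.subset_closure ⟨ω[j], hmem _ (List.getElem_mem hj), rfl⟩
  exact Subgroup.mul_mem _ (Subgroup.mul_mem _ (Subgroup.inv_mem _ hdrop) hget) hdrop

/-- Right inversions of an element of a standard parabolic subgroup lie in that subgroup. -/
lemma invs_subset_closure {X : Set B} {w : W} (hw : w ∈ Subgroup.closure (cs.simple '' X)) :
    Invs cs w ⊆ {t | t ∈ Subgroup.closure (cs.simple '' X) ∧ cs.IsReflection t} := by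
  obtain ⟨ω, hred, hmem, rfl⟩ := exists_reduced_word_subset cs hw
  intro t ht
  have h1 : t ∈ ris ω := mem_rightInvSeq_of_isRightInversion cs ht
  exact ⟨rightInvSeq_mem_closure cs hmem h1, ht.1⟩

section Longest

variable (X : Set B)

/-- The set of reflections lying in the standard parabolic subgroup generated by `X`. -/
def refls : Set W := {t | t ∈ Subgroup.closure (cs.simple '' X) ∧ cs.IsReflection t}

lemma refls_finite (hfin : (Subgroup.closure (cs.simple '' X) : Set W).Finite) :
    (refls cs X).Finite :=
  hfin.subset (fun t ht => ht.1)

lemma conj_mem_refls {v t : W} (hv : v ∈ Subgroup.closure (cs.simple '' X))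
    (ht : t ∈ refls cs X) : v * t * v⁻¹ ∈ refls cs X :=
  ⟨Subgroup.mul_mem _ (Subgroup.mul_mem _ hv ht.1) (Subgroup.inv_mem _ hv), ht.2.conj v⟩

variable {X}
variable {u : W} (hu : u ∈ Subgroup.closure (cs.simple '' X))
  (humax : ∀ v ∈ Subgroup.closure (cs.simple '' X), cs.length v ≤ cs.length u)

include hu humax

lemma invs_of_maximal : Invs cs u = refls cs X := by
  apply Set.Subset.antisymm (invs_subset_closure cs hu)
  intro t ht
  refine ⟨ht.2, ?_⟩
  have hle : ℓ (u * t) ≤ ℓ u := humax _ (Subgroup.mul_mem _ hu ht.1)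
  have hne : ℓ (u * t) ≠ ℓ u := ht.2.length_mul_left_ne u
  omega

lemma length_mul_of_maximal (hfin : (Subgroup.closure (cs.simple '' X) : Set W).Finite)
    {v : W} (hv : v ∈ Subgroup.closure (cs.simple '' X)) :
    ℓ (u * v) + ℓ v = ℓ u := by
  have hTH := refls_finite cs X hfin
  have hInvsU := invs_of_maximal cs hu humax
  have hsub : Invs cs (u * v) = refls cs X \ Invs cs v := by
    ext t
    constructor
    · intro ht
      have htH : t ∈ refls cs X :=
        invs_subset_closure cs (Subgroup.mul_mem _ hu hv) ht
      refine ⟨htH, fun htv => ?_⟩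
      have h1 : eta cs v t = 1 := eta_eq_one_of_isRightInversion cs htv
      have h2 : eta cs u (v * t * v⁻¹) = 1 := by
        apply eta_eq_one_of_isRightInversion cs
        have : v * t * v⁻¹ ∈ refls cs X := conj_mem_refls cs X hv htH
        rw [← hInvsU] at this
        exact this
      have h3 : eta cs (u * v) t = 1 := eta_eq_one_of_isRightInversion cs ht
      rw [eta_mul, h1, h2] at h3
      exact absurd h3 (by decide)
    · rintro ⟨htH, htv⟩
      have h1 : eta cs v t = 0 := by
        rcases (by decide : ∀ a : ZMod 2, a = 0 ∨ a = 1) (eta cs v t) with h | h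
        · exact h
        · exact absurd (isRightInversion_of_eta_eq_one cs h) htv
      have h2 : eta cs u (v * t * v⁻¹) = 1 := by
        apply eta_eq_one_of_isRightInversion cs
        have : v * t * v⁻¹ ∈ refls cs X := conj_mem_refls cs X hv htH
        rw [← hInvsU] at this
        exact this
      apply isRightInversion_of_eta_eq_one cs
      rw [eta_mul, h1, h2, zero_add]
  have hvsub : Invs cs v ⊆ refls cs X := invs_subset_closure cs hv
  have hlu : ℓ u = (refls cs X).ncard := by
    rw [length_eq_ncard_invs, hInvsU]
  have hlv : ℓ v = (Invs cs v).ncard := length_eq_ncard_invs cs v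
  have hluv : ℓ (u * v) = (refls cs X).ncard - (Invs cs v).ncard := by
    rw [length_eq_ncard_invs, hsub, Set.ncard_diff hvsub (invs_finite cs v)]
  have hle : (Invs cs v).ncard ≤ (refls cs X).ncard := Set.ncard_le_ncard hvsub hTH
  omega

lemma maximal_mul_self (hfin : (Subgroup.closure (cs.simple '' X) : Set W).Finite) :
    u * u = 1 := by
  have h := length_mul_of_maximal cs hu humax hfin hu
  have : ℓ (u * u) = 0 := by omega
  exact cs.length_eq_zero_iff.mp this

lemma maximal_unique (hfin : (Subgroup.closure (cs.simple '' X) : Set W).Finite)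
    {v : W} (hv : v ∈ Subgroup.closure (cs.simple '' X))
    (hvmax : ∀ x ∈ Subgroup.closure (cs.simple '' X), ℓ x ≤ ℓ v) : v = u := by
  have h1 := length_mul_of_maximal cs hu humax hfin hv
  have h2 : ℓ v = ℓ u := le_antisymm (humax v hv) (hvmax u hu)
  have h3 : ℓ (u * v) = 0 := by omega
  have h4 : u * v = 1 := cs.length_eq_zero_iff.mp h3
  have h5 := maximal_mul_self cs hu humax hfin
  calc v = (u * u) * v := by rw [h5, one_mul]
    _ = u * (u * v) := by rw [mul_assoc]
    _ = u := by rw [h4, mul_one]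

/-- An element of the parabolic all of whose `X`-simple reflections are right descents
is the longest element. -/
lemma all_descents_eq_maximal (hfin : (Subgroup.closure (cs.simple '' X) : Set W).Finite)
    {v : W} (hv : v ∈ Subgroup.closure (cs.simple '' X))
    (hdesc : ∀ i ∈ X, ℓ (v * s i) < ℓ v) : v = u := by
  set z := v⁻¹ * u with hzdef
  have hz : z ∈ Subgroup.closure (cs.simple '' X) :=
    Subgroup.mul_mem _ (Subgroup.inv_mem _ hv) hu
  have husq := maximal_mul_self cs hu humax hfin
  have huinv : u⁻¹ = u := by
    rw [← mul_one u⁻¹, ← husq, ← mul_assoc, inv_mul_cancel, one_mul]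
  have hlz : ℓ z + ℓ v = ℓ u := by
    have h1 : ℓ z = ℓ (u * v) := by
      rw [show z = (u⁻¹ * v)⁻¹ by rw [hzdef]; group, cs.length_inv, huinv]
    rw [h1]
    exact length_mul_of_maximal cs hu humax hfin hv
  by_cases hz1 : z = 1
  · have : v = u := by
      have : v * z = u := by rw [hzdef, ← mul_assoc, mul_inv_cancel, one_mul]
      rw [← this, hz1, mul_one]
    exact this
  · exfalso
    obtain ⟨ω, hred, hmem, hprod⟩ := exists_reduced_word_subset cs hz
    cases' ω with c ω'
    · exact hz1 (by rw [← hprod]; simp)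
    have hc : c ∈ X := hmem c List.mem_cons_self
    have hz2 : z = s c * π ω' := by rw [← hprod, cs.wordProd_cons]
    have hred' : cs.IsReduced ω' := by
      have := CoxeterSystem.IsReduced.drop (ω := c :: ω') hred 1
      simpa using this
    have hlω' : ℓ (π ω') = ω'.length := hred'
    have hlz2 : ℓ z = ω'.length + 1 := by
      rw [← hprod, hred]
      simp
    have hvz : v * z = u := by rw [hzdef, ← mul_assoc, mul_inv_cancel, one_mul]
    have hsplit : u = (v * s c) * π ω' := by
      rw [← hvz, hz2]
      group
    have h6 : ℓ ((v * s c) * π ω') ≤ ℓ (v * s c) + ℓ (π ω') := cs.length_mul_le _ _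
    have h7 : ℓ (v * s c) < ℓ v := hdesc c hc
    rw [← hsplit] at h6
    omega

end Longest

section Coset

variable (X : Set B)

lemma exists_min_coset (w : W) :
    ∃ h₀ ∈ Subgroup.closure (cs.simple '' X), ∀ h ∈ Subgroup.closure (cs.simple '' X),
      ℓ (w * h₀) ≤ ℓ (w * h) := by
  set S : Set ℕ := (fun h : W => ℓ (w * h)) '' ((Subgroup.closure (cs.simple '' X) : Subgroup W) :
    Set W) with hS
  have hne : S.Nonempty := ⟨ℓ (w * 1), 1, Subgroup.one_mem _, rfl⟩
  obtain ⟨m, ⟨h₀, hh₀, hm⟩, hmin⟩ := Nat.lt_wfRel.wf.has_min S hne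
  refine ⟨h₀, hh₀, fun h hh => ?_⟩
  have hm' : cs.length (w * h₀) = m := hm
  by_contra hcon
  push_neg at hcon
  exact hmin (ℓ (w * h)) ⟨h, hh, rfl⟩ (show cs.length (w * h) < m by omega)

lemma min_coset_additive {w₀ : W}
    (hmin : ∀ h ∈ Subgroup.closure (cs.simple '' X), cs.length w₀ ≤ cs.length (w₀ * h)) :
    ∀ n, ∀ v ∈ Subgroup.closure (cs.simple '' X), ℓ v ≤ n → ℓ (w₀ * v) = ℓ w₀ + ℓ v := by
  intro n
  induction n with
  | zero =>
    intro v hv hle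
    have : v = 1 := cs.length_eq_zero_iff.mp (by omega)
    subst this
    simp
  | succ n ih =>
    intro v hv hle
    obtain ⟨ω, hred, hmem, hprod⟩ := exists_reduced_word_subset cs hv
    rcases List.eq_nil_or_concat ω with rfl | ⟨ω', c, rfl⟩
    · rw [← hprod]; simp
    have hc : c ∈ X := hmem c (by simp)
    have hm' : ∀ j ∈ ω', j ∈ X := fun j hj => hmem j (by simp [hj])
    have hred' : cs.IsReduced ω' := by
      have := CoxeterSystem.IsReduced.take hred ω'.length
      simpa [List.concat_eq_append, List.take_left] using this
    have hv' : π ω' ∈ Subgroup.closure (cs.simple '' X) :=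
      (mem_closure_simples_iff cs X _).mpr ⟨ω', hm', rfl⟩
    have hveq : v = π ω' * s c := by
      rw [← hprod, List.concat_eq_append, cs.wordProd_append, cs.wordProd_singleton]
    have hlv : ℓ v = ω'.length + 1 := by
      rw [← hprod, hred, List.length_concat]
    have hlv' : ℓ (π ω') = ω'.length := hred'
    have ihv' : ℓ (w₀ * π ω') = ℓ w₀ + ℓ (π ω') := ih (π ω') hv' (by omega)
    have hgoal : ℓ (w₀ * π ω' * s c) = ℓ (w₀ * π ω') + 1 := by
      rcases cs.length_mul_simple (w₀ * π ω') c with h | h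
      · exact h
      · exfalso
        obtain ⟨ρ₀, hredρ, hρ⟩ := cs.exists_reduced_word' w₀
        have hππ : w₀ * π ω' = π (ρ₀ ++ ω') := by rw [cs.wordProd_append, hρ]
        have hinv : cs.IsRightInversion (π (ρ₀ ++ ω')) (s c) := by
          refine ⟨cs.isReflection_simple c, ?_⟩
          rw [← hππ]; omega
        have hmem2 := mem_rightInvSeq_of_isRightInversion cs hinv
        obtain ⟨j, hj, hgt⟩ := List.mem_iff_getElem.mp hmem2
        rw [cs.length_rightInvSeq, List.length_append] at hj
        have hjlen : j < (cs.rightInvSeq (ρ₀ ++ ω')).length := by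
          rw [cs.length_rightInvSeq, List.length_append]; exact hj
        have herase : π (ρ₀ ++ ω') * s c = π ((ρ₀ ++ ω').eraseIdx j) := by
          rw [← cs.wordProd_mul_getD_rightInvSeq, List.getD_eq_getElem _ 1 hjlen, hgt]
        by_cases hcase : j < ρ₀.length
        · rw [List.eraseIdx_append_of_lt_length hcase, cs.wordProd_append,
            cs.wordProd_append] at herase
          have hw1 : w₀ * (π ω' * s c * (π ω')⁻¹) = π (ρ₀.eraseIdx j) := by
            have h2 : w₀ * π ω' * s c = π (ρ₀.eraseIdx j) * π ω' := by
              rw [hρ]; exact herase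
            calc w₀ * (π ω' * s c * (π ω')⁻¹)
                = (w₀ * π ω' * s c) * (π ω')⁻¹ := by group
              _ = (π (ρ₀.eraseIdx j) * π ω') * (π ω')⁻¹ := by rw [h2]
              _ = π (ρ₀.eraseIdx j) := by group
          have hlen1 : ℓ (π (ρ₀.eraseIdx j)) < ℓ w₀ := by
            have e1 : ℓ (π (ρ₀.eraseIdx j)) ≤ (ρ₀.eraseIdx j).length :=
              cs.length_wordProd_le _
            have e2 : (ρ₀.eraseIdx j).length = ρ₀.length - 1 := by
              rw [List.length_eraseIdx]; simp [hcase]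
            have e3 : ρ₀.length = ℓ w₀ := by rw [hρ, hredρ]
            omega
          have hmemH : π ω' * s c * (π ω')⁻¹ ∈ Subgroup.closure (cs.simple '' X) :=
            Subgroup.mul_mem _ (Subgroup.mul_mem _ hv'
              (Subgroup.subset_closure ⟨c, hc, rfl⟩)) (Subgroup.inv_mem _ hv')
          have := hmin _ hmemH
          rw [hw1] at this
          omega
        · push_neg at hcase
          rw [List.eraseIdx_append_of_length_le hcase, cs.wordProd_append,
            cs.wordProd_append] at herase
          have hv2 : π ω' * s c = π (ω'.eraseIdx (j - ρ₀.length)) := by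
            refine mul_left_cancel (a := π ρ₀) ?_
            rw [← mul_assoc]
            exact herase
          have hlen2 : ℓ (π ω' * s c) ≤ ω'.length - 1 := by
            rw [hv2]
            have e1 : ℓ (π (ω'.eraseIdx (j - ρ₀.length))) ≤ (ω'.eraseIdx (j - ρ₀.length)).length :=
              cs.length_wordProd_le _
            have e2 : (ω'.eraseIdx (j - ρ₀.length)).length = ω'.length - 1 := by
              rw [List.length_eraseIdx]
              have : j - ρ₀.length < ω'.length := by omega
              simp [this]
            omega
          have hlvc : ℓ (π ω' * s c) = ω'.length + 1 := by rw [← hveq]; exact hlv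
          omega
    calc ℓ (w₀ * v) = ℓ (w₀ * π ω' * s c) := by rw [hveq, mul_assoc]
      _ = ℓ w₀ + ℓ v := by omega

lemma coset_decomp (w : W) :
    ∃ w₀ v, v ∈ Subgroup.closure (cs.simple '' X) ∧ w = w₀ * v ∧ ℓ w = ℓ w₀ + ℓ v ∧
      (∀ t ∈ refls cs X, (cs.IsRightInversion w t ↔ cs.IsRightInversion v t)) := by
  obtain ⟨h₀, hh₀, hmin⟩ := exists_min_coset cs X w
  set w₀ := w * h₀ with hw₀
  have hmin' : ∀ h ∈ Subgroup.closure (cs.simple '' X), ℓ w₀ ≤ ℓ (w₀ * h) := by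
    intro h hh
    have h1 : w₀ * h = w * (h₀ * h) := by rw [hw₀, mul_assoc]
    rw [h1]
    exact hmin _ (Subgroup.mul_mem _ hh₀ hh)
  have hadd : ∀ v ∈ Subgroup.closure (cs.simple '' X), ℓ (w₀ * v) = ℓ w₀ + ℓ v :=
    fun v hv => min_coset_additive cs X hmin' (ℓ v) v hv le_rfl
  have hwdec : w = w₀ * h₀⁻¹ := by rw [hw₀]; group
  have hzeroTH : ∀ t' ∈ refls cs X, eta cs w₀ t' = 0 := by
    intro t' ht'
    rcases (by decide : ∀ a : ZMod 2, a = 0 ∨ a = 1) (eta cs w₀ t') with h | h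
    · exact h
    · exfalso
      have hinv := isRightInversion_of_eta_eq_one cs h
      have h1 := hadd t' ht'.1
      have h2 : 1 ≤ ℓ t' := by
        obtain ⟨k, hk⟩ := ht'.2.odd_length
        omega
      have := hinv.2
      omega
  refine ⟨w₀, h₀⁻¹, Subgroup.inv_mem _ hh₀, hwdec, ?_, ?_⟩
  · rw [hwdec] at *; exact hadd _ (Subgroup.inv_mem _ hh₀)
  · intro t ht
    have hconj : h₀⁻¹ * t * h₀⁻¹⁻¹ ∈ refls cs X := conj_mem_refls cs X (Subgroup.inv_mem _ hh₀) ht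
    have hη : eta cs w t = eta cs h₀⁻¹ t := by
      rw [hwdec, eta_mul, hzeroTH _ hconj, add_zero]
    constructor
    · intro h
      apply isRightInversion_of_eta_eq_one cs
      rw [← hη]
      exact eta_eq_one_of_isRightInversion cs h
    · intro h
      apply isRightInversion_of_eta_eq_one cs
      rw [hη]
      exact eta_eq_one_of_isRightInversion cs h

end Coset

lemma descent_step {X : Set B} (hfin : (Subgroup.closure (cs.simple '' X) : Set W).Finite)
    {u : W} (hu : u ∈ Subgroup.closure (cs.simple '' X))
    (humax : ∀ v ∈ Subgroup.closure (cs.simple '' X), cs.length v ≤ cs.length u)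
    {w : W} (hdesc : ∀ i ∈ X, cs.IsRightInversion w (s i)) :
    w = (w * u) * u ∧ ℓ (w * u) + ℓ u = ℓ w := by
  obtain ⟨w₀, v, hvH, hwdec, hadd, hiff⟩ := coset_decomp cs X w
  have hvdesc : ∀ i ∈ X, ℓ (v * s i) < ℓ v := by
    intro i hi
    have hsi : s i ∈ refls cs X :=
      ⟨Subgroup.subset_closure ⟨i, hi, rfl⟩, cs.isReflection_simple i⟩
    exact ((hiff _ hsi).mp (hdesc i hi)).2
  have hveq : v = u := all_descents_eq_maximal cs hu humax hfin hvH hvdesc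
  subst hveq
  have husq := maximal_mul_self cs hu humax hfin
  have hwu : w * v = w₀ := by
    rw [hwdec, mul_assoc, husq, mul_one]
  constructor
  · rw [hwu, ← hwdec]
  · rw [hwu, ← hadd]

lemma aut_length_le {γ : MulAut W} (hγ : ⇑γ '' Set.range cs.simple = Set.range cs.simple)
    (w : W) : ℓ (γ w) ≤ ℓ w := by
  obtain ⟨ω, hred, hw⟩ := cs.exists_reduced_word' w
  subst hw
  have hσ : ∀ i : B, ∃ i', γ (s i) = s i' := by
    intro i
    have h1 : γ (s i) ∈ Set.range cs.simple := by
      rw [← hγ]; exact ⟨s i, ⟨i, rfl⟩, rfl⟩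
    obtain ⟨i', h⟩ := h1
    exact ⟨i', h.symm⟩
  choose σ hσ using hσ
  have hmap : ∀ ω : List B, γ (π ω) = π (ω.map σ) := by
    intro ω
    induction ω with
    | nil => simp
    | cons i ω ih => rw [cs.wordProd_cons, map_mul, hσ, ih, List.map_cons, cs.wordProd_cons]
  rw [hmap]
  calc ℓ (π (ω.map σ)) ≤ (ω.map σ).length := cs.length_wordProd_le _
    _ = ω.length := List.length_map _
    _ = ℓ (π ω) := hred.symm

lemma aut_length_eq (Γ : Subgroup (MulAut W))
    (hΓ : ∀ γ ∈ Γ, ⇑γ '' Set.range cs.simple = Set.range cs.simple)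
    {γ : MulAut W} (hγ : γ ∈ Γ) (w : W) : ℓ (γ w) = ℓ w := by
  refine le_antisymm (aut_length_le cs (hΓ γ hγ) w) ?_
  have h2 := aut_length_le cs (hΓ γ⁻¹ (Γ.inv_mem hγ)) (γ w)
  have h3 : γ⁻¹ (γ w) = w := by rw [MulAut.inv_def]; exact γ.symm_apply_apply w
  rw [h3] at h2
  exact h2

/-- All the facts we need about the longest element of a finite parabolic generated by
a Γ-orbit of simple reflections. -/
lemma orbit_facts (Γ : Subgroup (MulAut W))
    (hΓ : ∀ γ ∈ Γ, ⇑γ '' Set.range cs.simple = Set.range cs.simple)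
    {I : Set W} {s₀ : W} (hs₀ : s₀ ∈ Set.range cs.simple)
    (horb : I = {t | ∃ γ ∈ Γ, γ s₀ = t})
    (hfin : (Subgroup.closure I : Set W).Finite)
    {u : W} (humem : u ∈ Subgroup.closure I)
    (humax : ∀ v ∈ Subgroup.closure I, cs.length v ≤ cs.length u) :
    u * u = 1 ∧ (∀ γ ∈ Γ, γ u = u) ∧ 1 ≤ cs.length u ∧
    (∀ w : W, (∀ γ ∈ Γ, γ w = w) → (∃ t ∈ I, cs.IsRightInversion w t) →
      w = (w * u) * u ∧ cs.length (w * u) + cs.length u = cs.length w) := by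
  -- I consists of simple reflections
  have hIsimple : ∀ t ∈ I, t ∈ Set.range cs.simple := by
    rw [horb]
    rintro t ⟨γ, hγ, rfl⟩
    rw [← hΓ γ hγ]
    exact ⟨s₀, hs₀, rfl⟩
  set XI : Set B := {i | cs.simple i ∈ I} with hXI
  have hXIeq : cs.simple '' XI = I := by
    apply Set.Subset.antisymm
    · rintro t ⟨i, hi, rfl⟩; exact hi
    · intro t ht
      obtain ⟨i, rfl⟩ := hIsimple t ht
      exact ⟨i, ht, rfl⟩
  rw [← hXIeq] at hfin humem humax
  have hs₀I : s₀ ∈ I := by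
    rw [horb]; exact ⟨1, Subgroup.one_mem _, rfl⟩
  -- orbit is Γ-stable
  have hstab : ∀ γ ∈ Γ, ∀ t ∈ I, γ t ∈ I := by
    rw [horb]
    rintro γ hγ t ⟨γ', hγ', rfl⟩
    exact ⟨γ * γ', Subgroup.mul_mem _ hγ hγ', rfl⟩
  -- γ maps the parabolic into itself
  have hγcl : ∀ γ ∈ Γ, ∀ x ∈ Subgroup.closure (cs.simple '' XI),
      γ x ∈ Subgroup.closure (cs.simple '' XI) := by
    intro γ hγ x hx
    rw [hXIeq] at hx ⊢
    induction hx using Subgroup.closure_induction with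
    | mem g hg => exact Subgroup.subset_closure (hstab γ hγ g hg)
    | one => rw [map_one]; exact Subgroup.one_mem _
    | mul a b ha hb iha ihb => rw [map_mul]; exact Subgroup.mul_mem _ iha ihb
    | inv a ha iha => rw [map_inv]; exact Subgroup.inv_mem _ iha
  have husq : u * u = 1 := maximal_mul_self cs humem humax hfin
  -- Γ-fixedness of u
  have hufix : ∀ γ ∈ Γ, γ u = u := by
    intro γ hγ
    have h1 : γ u ∈ Subgroup.closure (cs.simple '' XI) := hγcl γ hγ u humem
    have h2 : ∀ v ∈ Subgroup.closure (cs.simple '' XI), cs.length v ≤ cs.length (γ u) := by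
      intro v hv
      have h3 : (γ⁻¹ : MulAut W) v ∈ Subgroup.closure (cs.simple '' XI) :=
        hγcl γ⁻¹ (Γ.inv_mem hγ) v hv
      have h4 : cs.length ((γ⁻¹ : MulAut W) v) ≤ cs.length u := humax _ h3
      have h5 : cs.length ((γ⁻¹ : MulAut W) v) = cs.length v :=
        aut_length_eq cs Γ hΓ (Γ.inv_mem hγ) v
      have h6 : cs.length (γ u) = cs.length u := aut_length_eq cs Γ hΓ hγ u
      omega
    exact maximal_unique cs humem humax hfin h1 h2
  have hlen1 : 1 ≤ cs.length u := by
    have h1 : s₀ ∈ Subgroup.closure (cs.simple '' XI) := by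
      rw [hXIeq]; exact Subgroup.subset_closure hs₀I
    have h2 := humax s₀ h1
    obtain ⟨i, rfl⟩ := hs₀
    rw [cs.length_simple] at h2
    omega
  refine ⟨husq, hufix, hlen1, ?_⟩
  intro w hwfix ⟨t₀, ht₀I, ht₀inv⟩
  have hdesc : ∀ i ∈ XI, cs.IsRightInversion w (s i) := by
    intro i hi
    have hsiI : cs.simple i ∈ I := hi
    rw [horb] at hsiI ht₀I
    obtain ⟨γ₁, hγ₁, hγ₁e⟩ := hsiI
    obtain ⟨γ₀, hγ₀, hγ₀e⟩ := ht₀I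
    set δ := γ₁ * γ₀⁻¹ with hδ
    have hδΓ : δ ∈ Γ := Subgroup.mul_mem _ hγ₁ (Γ.inv_mem hγ₀)
    have hδt₀ : δ t₀ = s i := by
      rw [hδ, MulAut.mul_apply, MulAut.inv_def, ← hγ₀e, γ₀.symm_apply_apply, hγ₁e]
    refine ⟨cs.isReflection_simple i, ?_⟩
    have h1 : δ (w * t₀) = w * s i := by
      rw [map_mul, hwfix δ hδΓ, hδt₀]
    have h2 : cs.length (w * s i) = cs.length (w * t₀) := by
      rw [← h1]; exact aut_length_eq cs Γ hΓ hδΓ _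
    rw [h2]
    exact ht₀inv.2
  exact descent_step cs hfin humem humax hdesc

end StmtAux

/-- for distinct `I, J ∈ S̄` and `K = I ∪ J`, the group of `Γ`-fixed points of
`W_K` is generated by the two involutions `w_I` and `w_J`; in particular it is dihedral. -/
theorem fixedPoints_union_eq_dihedral {B W : Type*} [Finite B] [Group W] {M : CoxeterMatrix B}
    (cs : CoxeterSystem M W) (Γ : Subgroup (MulAut W))
    (hΓ : ∀ γ ∈ Γ, ⇑γ '' Set.range cs.simple = Set.range cs.simple)
    (wI : Set W → W)
    (hwI : ∀ I : Set W, IsFinParabolicOrbit cs Γ I → IsLongestIn cs I (wI I))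
    (I J : Set W) (hI : IsFinParabolicOrbit cs Γ I) (hJ : IsFinParabolicOrbit cs Γ J)
    (hIJ : I ≠ J) :
    wI I * wI I = 1 ∧ wI J * wI J = 1 ∧
      {w : W | w ∈ Subgroup.closure (I ∪ J) ∧ ∀ γ ∈ Γ, γ w = w} =
        (Subgroup.closure {wI I, wI J} : Set W) := by
  classical
  obtain ⟨⟨sI, hsI, hIorb⟩, hIfin⟩ := id hI
  obtain ⟨⟨sJ, hsJ, hJorb⟩, hJfin⟩ := id hJ
  have hIfin' : (Subgroup.closure I : Set W).Finite := Set.finite_coe_iff.mp hIfin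
  have hJfin' : (Subgroup.closure J : Set W).Finite := Set.finite_coe_iff.mp hJfin
  obtain ⟨haI, haImax⟩ := hwI I hI
  obtain ⟨hbJ, hbJmax⟩ := hwI J hJ
  obtain ⟨hasq, hafix, halen, hastep⟩ :=
    StmtAux.orbit_facts cs Γ hΓ hsI hIorb hIfin' haI haImax
  obtain ⟨hbsq, hbfix, hblen, hbstep⟩ :=
    StmtAux.orbit_facts cs Γ hΓ hsJ hJorb hJfin' hbJ hbJmax
  refine ⟨hasq, hbsq, ?_⟩
  have hamem : wI I ∈ Subgroup.closure (I ∪ J) :=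
    Subgroup.closure_mono Set.subset_union_left haI
  have hbmem : wI J ∈ Subgroup.closure (I ∪ J) :=
    Subgroup.closure_mono Set.subset_union_right hbJ
  -- every element of I ∪ J is a simple reflection
  have hKsimple : ∀ t ∈ I ∪ J, t ∈ Set.range cs.simple := by
    rintro t (ht | ht)
    · rw [hIorb] at ht
      obtain ⟨γ, hγ, rfl⟩ := ht
      rw [← hΓ γ hγ]
      exact ⟨sI, hsI, rfl⟩
    · rw [hJorb] at ht
      obtain ⟨γ, hγ, rfl⟩ := ht
      rw [← hΓ γ hγ]
      exact ⟨sJ, hsJ, rfl⟩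
  set XK : Set B := {i | cs.simple i ∈ I ∪ J} with hXK
  have hXKeq : cs.simple '' XK = I ∪ J := by
    apply Set.Subset.antisymm
    · rintro t ⟨i, hi, rfl⟩; exact hi
    · intro t ht
      obtain ⟨i, rfl⟩ := hKsimple t ht
      exact ⟨i, ht, rfl⟩
  have main : ∀ n, ∀ w : W, cs.length w ≤ n → w ∈ Subgroup.closure (I ∪ J) →
      (∀ γ ∈ Γ, γ w = w) → w ∈ Subgroup.closure {wI I, wI J} := by
    intro n
    induction n with
    | zero =>
      intro w hlen hmem hfix
      have hw1 : w = 1 := cs.length_eq_zero_iff.mp (by omega)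
      subst hw1
      exact Subgroup.one_mem _
    | succ n ih =>
      intro w hlen hmem hfix
      by_cases hw1 : w = 1
      · subst hw1; exact Subgroup.one_mem _
      have hmem' : w ∈ Subgroup.closure (cs.simple '' XK) := by rw [hXKeq]; exact hmem
      obtain ⟨ω, hred, hmemω, hprod⟩ := StmtAux.exists_reduced_word_subset cs hmem'
      rcases List.eq_nil_or_concat ω with rfl | ⟨ω', c, rfl⟩
      · exact absurd (by rw [← hprod]; simp) hw1
      have hc : cs.simple c ∈ I ∪ J := hmemω c (by simp)
      have hinv : cs.IsRightInversion w (cs.simple c) := by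
        refine ⟨cs.isReflection_simple c, ?_⟩
        have h1 : w * cs.simple c = cs.wordProd ω' := by
          rw [← hprod, List.concat_eq_append, cs.wordProd_append, cs.wordProd_singleton,
            mul_assoc, cs.simple_mul_simple_self, mul_one]
        have h2 : cs.length (cs.wordProd ω') ≤ ω'.length := cs.length_wordProd_le ω'
        have h3 : cs.length w = ω'.length + 1 := by
          rw [← hprod, hred, List.length_concat]
        rw [h1]; omega
      rcases hc with hcI | hcJ
      · obtain ⟨heq, hlen2⟩ := hastep w hfix ⟨cs.simple c, hcI, hinv⟩
        have hwa_mem : w * wI I ∈ Subgroup.closure (I ∪ J) :=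
          Subgroup.mul_mem _ hmem hamem
        have hwa_fix : ∀ γ ∈ Γ, γ (w * wI I) = w * wI I := fun γ hγ => by
          rw [map_mul, hfix γ hγ, hafix γ hγ]
        have h5 := ih (w * wI I) (by omega) hwa_mem hwa_fix
        rw [heq]
        exact Subgroup.mul_mem _ h5 (Subgroup.subset_closure (Set.mem_insert _ _))
      · obtain ⟨heq, hlen2⟩ := hbstep w hfix ⟨cs.simple c, hcJ, hinv⟩
        have hwa_mem : w * wI J ∈ Subgroup.closure (I ∪ J) :=
          Subgroup.mul_mem _ hmem hbmem
        have hwa_fix : ∀ γ ∈ Γ, γ (w * wI J) = w * wI J := fun γ hγ => by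
          rw [map_mul, hfix γ hγ, hbfix γ hγ]
        have h5 := ih (w * wI J) (by omega) hwa_mem hwa_fix
        rw [heq]
        exact Subgroup.mul_mem _ h5
          (Subgroup.subset_closure (Set.mem_insert_of_mem _ rfl))
  apply Set.Subset.antisymm
  · rintro w ⟨hwmem, hwfix⟩
    exact main (cs.length w) w le_rfl hwmem hwfix
  · intro w hw
    have hle : Subgroup.closure {wI I, wI J} ≤
        Subgroup.closure (I ∪ J) ⊓ fixedSubgroup Γ := by
      apply Subgroup.closure_le _ |>.mpr
      rintro x (rfl | rfl)
      · exact Subgroup.mem_inf.mpr ⟨hamem, hafix⟩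
      · exact Subgroup.mem_inf.mpr ⟨hbmem, hbfix⟩
    have := hle hw
    rw [Subgroup.mem_inf] at this
    exact ⟨this.1, this.2⟩
end

section
/- Let I, J ∈ S̄ with I ≠ J, set K := I ∪ J, and assume W_K is finite. Let 2m be the order of the dihedral group W_K^Γ = ⟨w_I, w_J⟩. Then every y ∈ W_K^Γ satisfies l(y) ≤ (m/2)(l(w_I) + l(w_J)). -/
open CoxeterSystem


open List

namespace StrongExch

open scoped Classical

variable {B : Type*} {W : Type*} [Group W] {M : CoxeterMatrix B} (cs : CoxeterSystem M W)

local prefix:100 "σ" => cs.simple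
local prefix:100 "π" => cs.wordProd

lemma zmod2_add_self : ∀ x : ZMod 2, x + x = 0 := by decide

lemma sum_range_add' {M' : Type*} [AddCommMonoid M'] (f : ℕ → M') (A : ℕ) :
    ∀ C : ℕ, ∑ k ∈ Finset.range (A + C), f k
      = ∑ k ∈ Finset.range A, f k + ∑ k ∈ Finset.range C, f (A + k) := by
  intro C
  induction C with
  | zero => simp
  | succ C ih =>
      rw [← Nat.add_assoc, Finset.sum_range_succ, ih, Finset.sum_range_succ, add_assoc]

lemma sum_pair (f : ℕ → ZMod 2) (N : ℕ) :
    ∑ n ∈ Finset.range N, (f (2 * n) + f (2 * n + 1)) = ∑ k ∈ Finset.range (2 * N), f k := by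
  induction N with
  | zero => simp
  | succ N ih =>
      rw [Finset.sum_range_succ, ih, Nat.mul_succ, Finset.sum_range_succ, Finset.sum_range_succ]
      ring

noncomputable def sigmaFun (i : B) : W × ZMod 2 → W × ZMod 2 :=
  fun p => (σ i * p.1 * σ i, p.2 + (if p.1 = σ i then 1 else 0))

lemma simple_conj_eq_iff (i : B) (t : W) : σ i * t * σ i = σ i ↔ t = σ i := by
  constructor
  · intro h
    have ht : t = σ i * (σ i * t * σ i) * σ i := by simp [mul_assoc]
    rw [h] at ht
    simpa [mul_assoc] using ht
  · rintro rfl; simp [mul_assoc]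

lemma sigmaFun_involutive (i : B) : Function.Involutive (sigmaFun cs i) := by
  rintro ⟨t, ε⟩
  simp only [sigmaFun]
  refine Prod.ext (by simp [mul_assoc]) ?_
  simp only [simple_conj_eq_iff]
  rw [add_assoc, zmod2_add_self, add_zero]

noncomputable def sigma (i : B) : Equiv.Perm (W × ZMod 2) :=
  (sigmaFun_involutive cs i).toPerm

lemma sigma_apply (i : B) (t : W) (ε : ZMod 2) :
    sigma cs i (t, ε) = (σ i * t * σ i, ε + (if t = σ i then 1 else 0)) := rfl

/-- key dihedral identity -/
lemma simple_conj_r_pow (i j : B) (n : ℕ) :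
    ((σ i * σ j) ^ n)⁻¹ * σ j * (σ i * σ j) ^ n = σ j * (σ i * σ j) ^ (2 * n) := by
  have hj : σ j * (σ i * σ j) * σ j = (σ i * σ j)⁻¹ := by
    simp [mul_assoc]
  have h : σ j * ((σ i * σ j) ^ n) * σ j = ((σ i * σ j) ^ n)⁻¹ := by
    have hc := conj_pow (a := σ j) (b := σ i * σ j) (i := n)
    rw [cs.inv_simple] at hc
    rw [← hc, hj, inv_pow]
  have h' : σ j * ((σ i * σ j) ^ n)⁻¹ * σ j = (σ i * σ j) ^ n := by
    rw [← h]; simp [mul_assoc]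
  calc ((σ i * σ j) ^ n)⁻¹ * σ j * (σ i * σ j) ^ n
      = (σ j * (σ j * ((σ i * σ j) ^ n)⁻¹ * σ j)) * (σ i * σ j) ^ n := by
        simp [mul_assoc]
    _ = σ j * (σ i * σ j) ^ (2 * n) := by
        rw [h', two_mul, pow_add, mul_assoc]

lemma simple_conj_r_pow' (i j : B) (n : ℕ) :
    ((σ i * σ j) ^ n)⁻¹ * (σ j * σ i * σ j) * (σ i * σ j) ^ n
      = σ j * (σ i * σ j) ^ (2 * n + 1) := by
  have hr : σ j * σ i * σ j = (σ i * σ j)⁻¹ * σ j := by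
    rw [mul_inv_rev]; simp [mul_assoc]
  rw [hr]
  have hA : (σ i * σ j)⁻¹ * σ j = σ j * (σ i * σ j) := by
    rw [mul_inv_rev]; simp [mul_assoc]
  have hcomm : (σ i * σ j) * (σ i * σ j) ^ n = (σ i * σ j) ^ n * (σ i * σ j) :=
    (pow_succ' _ n).symm.trans (pow_succ _ n)
  calc ((σ i * σ j) ^ n)⁻¹ * ((σ i * σ j)⁻¹ * σ j) * (σ i * σ j) ^ n
      = ((σ i * σ j) ^ n)⁻¹ * σ j * ((σ i * σ j) * (σ i * σ j) ^ n) := by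
        rw [hA]; simp only [mul_assoc]
    _ = ((σ i * σ j) ^ n)⁻¹ * σ j * (σ i * σ j) ^ n * (σ i * σ j) := by
        rw [hcomm, ← mul_assoc]
    _ = σ j * (σ i * σ j) ^ (2 * n + 1) := by
        rw [simple_conj_r_pow, pow_succ, mul_assoc]

noncomputable def incr (i j : B) (t : W) : ZMod 2 :=
  (if t = σ j then 1 else 0) + (if σ j * t * σ j = σ i then 1 else 0)

lemma sigma_mul_pow_apply (i j : B) (k : ℕ) (t : W) (ε : ZMod 2) :
    ((sigma cs i * sigma cs j) ^ k) (t, ε) =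
      ((σ i * σ j) ^ k * t * ((σ i * σ j) ^ k)⁻¹,
        ε + ∑ n ∈ Finset.range k, incr cs i j ((σ i * σ j) ^ n * t * ((σ i * σ j) ^ n)⁻¹)) := by
  induction k generalizing t ε with
  | zero => simp
  | succ k ih =>
      rw [pow_succ, Equiv.Perm.mul_apply]
      have h1 : (sigma cs i * sigma cs j) (t, ε) =
          ((σ i * σ j) * t * (σ i * σ j)⁻¹, ε + incr cs i j t) := by
        rw [Equiv.Perm.mul_apply, sigma_apply, sigma_apply]
        refine Prod.ext ?_ (by simp [incr, add_assoc])
        show σ i * (σ j * t * σ j) * σ i = σ i * σ j * t * (σ i * σ j)⁻¹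
        rw [mul_inv_rev, cs.inv_simple, cs.inv_simple]
        simp [mul_assoc]
      rw [h1, ih]
      refine Prod.ext ?_ ?_
      · show (σ i * σ j) ^ k * (σ i * σ j * t * (σ i * σ j)⁻¹) * ((σ i * σ j) ^ k)⁻¹ = _
        rw [pow_succ, mul_inv_rev]
        simp [mul_assoc]
      · show ε + incr cs i j t + _ = ε + _
        rw [Finset.sum_range_succ', add_assoc]
        congr 1
        simp only [pow_zero, one_mul, inv_one, mul_one]
        rw [add_comm]
        congr 1
        refine Finset.sum_congr rfl fun n _ => ?_
        congr 1
        rw [pow_succ, mul_inv_rev]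
        simp [mul_assoc]

theorem sigma_liftable : M.IsLiftable (sigma cs) := by
  intro i j
  refine Equiv.ext fun p => ?_
  obtain ⟨t, ε⟩ := p
  rw [Equiv.Perm.one_apply, sigma_mul_pow_apply]
  have hM : (σ i * σ j) ^ M i j = 1 := cs.simple_mul_simple_pow i j
  have hfst : (σ i * σ j) ^ M i j * t * ((σ i * σ j) ^ M i j)⁻¹ = t := by
    rw [hM]; simp
  have hterm : ∀ n : ℕ,
      incr cs i j ((σ i * σ j) ^ n * t * ((σ i * σ j) ^ n)⁻¹)
      = ((if t = σ j * (σ i * σ j) ^ (2*n) then (1:ZMod 2) else 0)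
          + (if t = σ j * (σ i * σ j) ^ (2*n+1) then 1 else 0)) := by
    intro n
    unfold incr
    congr 1
    · congr 1
      rw [eq_iff_iff]
      constructor
      · intro h
        have ht := congrArg
          (fun x => ((σ i * σ j) ^ n)⁻¹ * x * (σ i * σ j) ^ n) h
        have hcan : ((σ i * σ j) ^ n)⁻¹ * ((σ i * σ j) ^ n * t * ((σ i * σ j) ^ n)⁻¹)
            * (σ i * σ j) ^ n = t := by group
        rw [hcan, simple_conj_r_pow] at ht
        exact ht
      · rintro rfl
        rw [← simple_conj_r_pow]
        group
    · congr 1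
      rw [eq_iff_iff]
      constructor
      · intro h
        have ht := congrArg
          (fun x => ((σ i * σ j) ^ n)⁻¹ * (σ j * x * σ j) * (σ i * σ j) ^ n) h
        have hcan : ((σ i * σ j) ^ n)⁻¹
            * (σ j * (σ j * ((σ i * σ j) ^ n * t * ((σ i * σ j) ^ n)⁻¹) * σ j) * σ j)
            * (σ i * σ j) ^ n = t := by
          simp [mul_assoc]
        rw [hcan, simple_conj_r_pow'] at ht
        exact ht
      · rintro rfl
        rw [← simple_conj_r_pow']
        show σ j * ((σ i * σ j) ^ n * (((σ i * σ j) ^ n)⁻¹ * (σ j * σ i * σ j) * (σ i * σ j) ^ n)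
            * ((σ i * σ j) ^ n)⁻¹) * σ j = σ i
        have hred : (σ i * σ j) ^ n * (((σ i * σ j) ^ n)⁻¹ * (σ j * σ i * σ j) * (σ i * σ j) ^ n)
            * ((σ i * σ j) ^ n)⁻¹ = σ j * σ i * σ j := by group
        rw [hred]
        simp [mul_assoc]
  have hsum : ∑ n ∈ Finset.range (M i j),
      incr cs i j ((σ i * σ j) ^ n * t * ((σ i * σ j) ^ n)⁻¹) = 0 := by
    rw [Finset.sum_congr rfl fun n _ => hterm n]
    rw [sum_pair (fun k => if t = σ j * (σ i * σ j) ^ k then (1:ZMod 2) else 0)]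
    have h2M : 2 * M.M i j = M.M i j + M.M i j := by omega
    rw [h2M, sum_range_add']
    have hshift : ∀ k : ℕ, (if t = σ j * (σ i * σ j) ^ (M.M i j + k) then (1:ZMod 2) else 0)
        = (if t = σ j * (σ i * σ j) ^ k then (1:ZMod 2) else 0) := by
      intro k
      rw [pow_add, hM, one_mul]
    rw [Finset.sum_congr rfl fun k _ => hshift k]
    exact zmod2_add_self _
  refine Prod.ext ?_ ?_
  · simpa using hfst
  · show ε + _ = ε
    rw [hsum, add_zero]

/-! ### theta and the parity function -/

lemma zmod2_cases : ∀ x : ZMod 2, x = 0 ∨ x = 1 := by decide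

lemma zmod2_eq_of_add_eq_zero : ∀ x y : ZMod 2, x + y = 0 → y = x := by decide

noncomputable def theta : W →* Equiv.Perm (W × ZMod 2) :=
  cs.lift ⟨sigma cs, sigma_liftable cs⟩

lemma theta_simple (i : B) : theta cs (σ i) = sigma cs i :=
  cs.lift_apply_simple (sigma_liftable cs) i

noncomputable def nn (w t : W) : ZMod 2 := ((theta cs w) (t, 0)).2

lemma ris_cons (i : B) (ω : List B) :
    cs.rightInvSeq (i :: ω) = ((π ω)⁻¹ * σ i * π ω) :: cs.rightInvSeq ω := rfl

lemma theta_wordProd (ω : List B) (t : W) (ε : ZMod 2) :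
    theta cs (π ω) (t, ε) =
      (π ω * t * (π ω)⁻¹, ε + ((cs.rightInvSeq ω).count t : ZMod 2)) := by
  induction ω generalizing t ε with
  | nil => simp [theta]
  | cons i ω ih =>
      rw [cs.wordProd_cons, map_mul, Equiv.Perm.mul_apply, ih, theta_simple, sigma_apply]
      refine Prod.ext ?_ ?_
      · show σ i * (π ω * t * (π ω)⁻¹) * σ i = π (i :: ω) * t * (π (i :: ω))⁻¹
        rw [cs.wordProd_cons, mul_inv_rev, cs.inv_simple]
        simp [mul_assoc]
      · show ε + ↑(List.count t (cs.rightInvSeq ω))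
            + (if π ω * t * (π ω)⁻¹ = σ i then 1 else 0)
            = ε + ↑(List.count t (cs.rightInvSeq (i :: ω)))
        have hiff : (π ω * t * (π ω)⁻¹ = σ i) ↔ (t = (π ω)⁻¹ * σ i * π ω) := by
          constructor
          · intro h
            rw [← h]; group
          · intro h
            rw [h]; group
        rw [ris_cons, List.count_cons, Nat.cast_add, ← add_assoc]
        congr 1
        by_cases hc : t = (π ω)⁻¹ * σ i * π ω
        · rw [if_pos (hiff.mpr hc), if_pos (beq_iff_eq.mpr hc.symm)]
          simp
        · rw [if_neg (fun hh => hc (hiff.mp hh)),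
            if_neg (by simpa using fun hh => hc hh.symm)]
          simp

lemma theta_apply (w t : W) (ε : ZMod 2) :
    theta cs w (t, ε) = (w * t * w⁻¹, ε + nn cs w t) := by
  obtain ⟨ω, rfl⟩ := cs.wordProd_surjective w
  rw [theta_wordProd]
  unfold nn
  rw [theta_wordProd, zero_add]

lemma nn_eq_count (ω : List B) (t : W) :
    nn cs (π ω) t = ((cs.rightInvSeq ω).count t : ZMod 2) := by
  unfold nn
  rw [theta_wordProd, zero_add]

lemma nn_mul (u v t : W) : nn cs (u * v) t = nn cs v t + nn cs u (v * t * v⁻¹) := by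
  unfold nn
  rw [map_mul, Equiv.Perm.mul_apply, theta_apply, theta_apply]
  simp [nn]

lemma nn_simple (i : B) (t : W) : nn cs (σ i) t = if t = σ i then 1 else 0 := by
  unfold nn
  rw [theta_simple, sigma_apply, zero_add]

lemma nn_one (t : W) : nn cs 1 t = 0 := by
  unfold nn
  rw [map_one, Equiv.Perm.one_apply]

lemma nn_inv (u t : W) : nn cs u⁻¹ (u * t * u⁻¹) = nn cs u t := by
  have h := nn_mul cs u⁻¹ u t
  rw [inv_mul_cancel, nn_one] at h
  exact zmod2_eq_of_add_eq_zero _ _ h.symm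

lemma nn_refl_self {t : W} (ht : cs.IsReflection t) : nn cs t t = 1 := by
  obtain ⟨u, i, rfl⟩ := ht
  have hx : (σ i * u⁻¹) * (u * σ i * u⁻¹) * (σ i * u⁻¹)⁻¹ = σ i := by
    have e : (σ i * u⁻¹) * (u * σ i * u⁻¹) * (σ i * u⁻¹)⁻¹ = σ i * σ i * (σ i)⁻¹ := by
      group
    rw [e, mul_inv_cancel_right]
  have hy : u⁻¹ * (u * σ i * u⁻¹) * (u⁻¹)⁻¹ = σ i := by group
  have hA : nn cs (u * σ i * u⁻¹) (u * σ i * u⁻¹)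
      = nn cs (σ i * u⁻¹) (u * σ i * u⁻¹) + nn cs u (σ i) := by
    have h := nn_mul cs u (σ i * u⁻¹) (u * σ i * u⁻¹)
    rw [hx] at h
    rw [← mul_assoc] at h
    exact h
  have hB : nn cs (σ i * u⁻¹) (u * σ i * u⁻¹)
      = nn cs u⁻¹ (u * σ i * u⁻¹) + nn cs (σ i) (σ i) := by
    have h := nn_mul cs (σ i) u⁻¹ (u * σ i * u⁻¹)
    rw [hy] at h
    exact h
  have hC : nn cs u⁻¹ (u * σ i * u⁻¹) = nn cs u (σ i) := nn_inv cs u (σ i)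
  rw [hA, hB, hC, nn_simple, if_pos rfl]
  exact (by decide : ∀ x : ZMod 2, x + 1 + x = 1) _

lemma mem_ris_of_nn_one {ω : List B} {t : W} (h : nn cs (π ω) t = 1) :
    t ∈ cs.rightInvSeq ω := by
  by_contra hmem
  rw [nn_eq_count, List.count_eq_zero_of_not_mem hmem] at h
  simp at h

lemma isRightInversion_of_nn_one {w t : W} (h : nn cs w t = 1) :
    cs.IsRightInversion w t := by
  obtain ⟨ω, hred, hw⟩ := cs.exists_reduced_word' w
  subst hw
  exact cs.isRightInversion_of_mem_rightInvSeq hred (mem_ris_of_nn_one cs h)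

theorem nn_one_of_isRightInversion {w t : W} (h : cs.IsRightInversion w t) :
    nn cs w t = 1 := by
  obtain ⟨href, hlt⟩ := h
  have htt : t * t = 1 := href.mul_self
  have hw : w = (w * t) * t := by rw [mul_assoc, htt, mul_one]
  have h1 : nn cs w t = nn cs t t + nn cs (w * t) (t * t * t⁻¹) := by
    rw (occs := .pos [1]) [hw]
    rw [nn_mul]
  have h2 : t * t * t⁻¹ = t := by rw [htt, one_mul, href.inv]
  have h3 : nn cs (w * t) t = 0 := by
    rcases zmod2_cases (nn cs (w * t) t) with h0 | h1'
    · exact h0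
    · exfalso
      have hinv := isRightInversion_of_nn_one cs h1'
      have := hinv.2
      rw [mul_assoc, htt, mul_one] at this
      omega
  rw [h1, h2, h3, nn_refl_self cs href, add_zero]

/-- The strong exchange property -/
theorem strongExchange {w t : W} (h : cs.IsRightInversion w t) {ω : List B}
    (hω : π ω = w) : t ∈ cs.rightInvSeq ω := by
  apply mem_ris_of_nn_one
  rw [hω]
  exact nn_one_of_isRightInversion cs h

lemma exchange_of_mem_ris {ω : List B} {t : W} (h : t ∈ cs.rightInvSeq ω) :
    ∃ j < ω.length, π ω * t = π (ω.eraseIdx j) := by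
  obtain ⟨n, hn, heq⟩ := List.getElem_of_mem h
  rw [cs.length_rightInvSeq] at hn
  refine ⟨n, hn, ?_⟩
  have := cs.wordProd_mul_getD_rightInvSeq ω n
  rwa [List.getD_eq_getElem _ _ (by rwa [cs.length_rightInvSeq]), heq] at this


/-! ### Deletion and parabolic subgroups -/

lemma deletion {ω : List B} (h : ¬ cs.IsReduced ω) :
    ∃ ω' : List B, ω'.Sublist ω ∧ π ω' = π ω ∧ ω'.length < ω.length := by
  induction ω with
  | nil => exact absurd (by simp [CoxeterSystem.IsReduced]) h
  | cons i ω₀ ih =>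
      by_cases h₀ : cs.IsReduced ω₀
      · -- the drop happens at the first letter
        have hlt : cs.length (σ i * π ω₀) < cs.length (π ω₀) := by
          rcases cs.length_simple_mul (π ω₀) i with hcase | hcase
          · exfalso
            apply h
            unfold CoxeterSystem.IsReduced at h₀ ⊢
            rw [cs.wordProd_cons, hcase, h₀, List.length_cons]
          · have hne := cs.length_simple_mul_ne (π ω₀) i
            omega
        have hinv : cs.IsRightInversion (π ω₀)⁻¹ (σ i) := by
          refine ⟨cs.isReflection_simple i, ?_⟩
          have he : (π ω₀)⁻¹ * σ i = (σ i * π ω₀)⁻¹ := by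
            rw [mul_inv_rev, cs.inv_simple]
          rw [he, cs.length_inv, cs.length_inv]
          exact hlt
        have hmem : σ i ∈ cs.rightInvSeq ω₀.reverse :=
          strongExchange cs hinv (cs.wordProd_reverse ω₀)
        obtain ⟨j, hj, hexch⟩ := exchange_of_mem_ris cs hmem
        refine ⟨(ω₀.reverse.eraseIdx j).reverse, ?_, ?_, ?_⟩
        · have h1 : (ω₀.reverse.eraseIdx j).Sublist ω₀.reverse := List.eraseIdx_sublist _ j
          have h2 := h1.reverse
          rw [List.reverse_reverse] at h2
          exact h2.trans (List.sublist_cons_self i ω₀)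
        · rw [cs.wordProd_reverse, ← hexch, cs.wordProd_reverse, cs.wordProd_cons]
          rw [mul_inv_rev, inv_inv, cs.inv_simple]
        · have h1 : (ω₀.reverse.eraseIdx j).length ≤ ω₀.reverse.length :=
            (List.eraseIdx_sublist _ j).length_le
          rw [List.length_reverse] at h1
          rw [List.length_reverse, List.length_cons]
          omega
      · obtain ⟨ω', hsub, hprod, hlen⟩ := ih h₀
        refine ⟨i :: ω', hsub.cons₂ i, ?_, ?_⟩
        · rw [cs.wordProd_cons, cs.wordProd_cons, hprod]
        · simpa using Nat.succ_lt_succ hlen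

lemma wordProd_mem_closure {I : Set W} {ω : List B} (hω : ∀ i ∈ ω, σ i ∈ I) :
    π ω ∈ Subgroup.closure I := by
  induction ω with
  | nil => rw [cs.wordProd_nil]; exact Subgroup.one_mem _
  | cons i ω ih =>
      rw [cs.wordProd_cons]
      exact mul_mem (Subgroup.subset_closure (hω i (by simp)))
        (ih fun j hj => hω j (List.mem_cons_of_mem _ hj))

lemma exists_word_letters {I : Set W} (hIs : I ⊆ Set.range cs.simple) {w : W}
    (hw : w ∈ Subgroup.closure I) :
    ∃ ω : List B, π ω = w ∧ ∀ i ∈ ω, σ i ∈ I := by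
  induction hw using Subgroup.closure_induction with
  | mem x hx =>
      obtain ⟨i, hi⟩ := hIs hx
      exact ⟨[i], by simp [hi], by simpa [hi] using hx⟩
  | one => exact ⟨[], by simp, by simp⟩
  | mul x y hx hy ihx ihy =>
      obtain ⟨ω₁, h1, h1'⟩ := ihx
      obtain ⟨ω₂, h2, h2'⟩ := ihy
      exact ⟨ω₁ ++ ω₂, by rw [cs.wordProd_append, h1, h2],
        fun i hi => (List.mem_append.mp hi).elim (h1' i) (h2' i)⟩
  | inv x hx ihx =>
      obtain ⟨ω₁, h1, h1'⟩ := ihx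
      exact ⟨ω₁.reverse, by rw [cs.wordProd_reverse, h1],
        fun i hi => h1' i (List.mem_reverse.mp hi)⟩

lemma reduce_word : ∀ (n : ℕ) (ω : List B), ω.length ≤ n →
    ∃ ω' : List B, cs.IsReduced ω' ∧ π ω' = π ω ∧ ∀ i ∈ ω', i ∈ ω := by
  intro n
  induction n with
  | zero =>
      intro ω hω
      have : ω = [] := List.length_eq_zero_iff.mp (by omega)
      subst this
      exact ⟨[], by simp [CoxeterSystem.IsReduced], rfl, by simp⟩
  | succ n ih =>
      intro ω hω
      by_cases hred : cs.IsReduced ω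
      · exact ⟨ω, hred, rfl, fun i hi => hi⟩
      · obtain ⟨ω₂, hsub, hprod, hlen⟩ := deletion cs hred
        obtain ⟨ω', h1, h2, h3⟩ := ih ω₂ (by omega)
        exact ⟨ω', h1, h2.trans hprod, fun i hi => hsub.subset (h3 i hi)⟩

lemma exists_reduced_word_letters {I : Set W} (hIs : I ⊆ Set.range cs.simple) {w : W}
    (hw : w ∈ Subgroup.closure I) :
    ∃ ω : List B, cs.IsReduced ω ∧ π ω = w ∧ ∀ i ∈ ω, σ i ∈ I := by
  obtain ⟨ω, hprod, hlet⟩ := exists_word_letters cs hIs hw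
  obtain ⟨ω', h1, h2, h3⟩ := reduce_word cs ω.length ω le_rfl
  exact ⟨ω', h1, h2.trans hprod, fun i hi => hlet i (h3 i hi)⟩

lemma ris_mem_closure {I : Set W} {ω : List B} (hω : ∀ i ∈ ω, σ i ∈ I) {t : W}
    (ht : t ∈ cs.rightInvSeq ω) : t ∈ Subgroup.closure I := by
  induction ω with
  | nil => simp [cs.rightInvSeq_nil] at ht
  | cons i ω ih =>
      rw [ris_cons] at ht
      have htail : ∀ j ∈ ω, σ j ∈ I := fun j hj => hω j (List.mem_cons_of_mem _ hj)
      rcases List.mem_cons.mp ht with h | h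
      · subst h
        have h1 : π ω ∈ Subgroup.closure I := wordProd_mem_closure cs htail
        exact mul_mem (mul_mem (inv_mem h1)
          (Subgroup.subset_closure (hω i (by simp)))) h1
      · exact ih htail h

/-! ### Inversions determine the element -/

lemma eq_one_of_no_inversion {w : W} (h : ∀ t, ¬ cs.IsRightInversion w t) : w = 1 := by
  by_contra hw
  obtain ⟨i, hdesc⟩ := cs.exists_rightDescent_of_ne_one hw
  exact h (σ i) ⟨cs.isReflection_simple i, hdesc⟩

lemma isRightInversion_mul_simple_iff {x : W} {i : B} (hdesc : cs.IsRightDescent x i) (t : W) :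
    cs.IsRightInversion (x * σ i) t ↔
      (cs.IsRightInversion x (σ i * t * σ i) ∧ σ i * t * σ i ≠ σ i) := by
  obtain ⟨ω₀, hred₀, hprod₀⟩ := cs.exists_reduced_word' (x * σ i)
  have hlen_x : cs.length x = cs.length (x * σ i) + 1 := by
    have h1 : cs.length (x * σ i) < cs.length x := hdesc
    have h2 : cs.length x ≤ cs.length (x * σ i) + 1 := by
      have h3 := cs.length_mul_le (x * σ i) (σ i)
      rw [mul_assoc, cs.simple_mul_simple_self, mul_one, cs.length_simple] at h3
      exact h3
    omega
  have hprod : π (ω₀.concat i) = x := by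
    rw [cs.wordProd_concat, ← hprod₀, mul_assoc, cs.simple_mul_simple_self, mul_one]
  have hred : cs.IsReduced (ω₀.concat i) := by
    unfold CoxeterSystem.IsReduced at hred₀ ⊢
    rw [hprod, List.length_concat, ← hred₀, ← hprod₀, ← hlen_x]
  constructor
  · intro h
    have hmem : t ∈ cs.rightInvSeq ω₀ := strongExchange cs h hprod₀.symm
    have hmem' : σ i * t * σ i ∈ cs.rightInvSeq (ω₀.concat i) := by
      rw [cs.rightInvSeq_concat, List.concat_eq_append]
      apply List.mem_append_left
      have := List.mem_map_of_mem (f := ⇑(MulAut.conj (σ i))) hmem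
      rwa [MulAut.conj_apply, cs.inv_simple] at this
    have hinv' := cs.isRightInversion_of_mem_rightInvSeq hred hmem'
    rw [hprod] at hinv'
    refine ⟨hinv', fun heq => ?_⟩
    have hti : t = σ i := (simple_conj_eq_iff cs i t).mp heq
    subst hti
    have h2 := h.2
    rw [mul_assoc, cs.simple_mul_simple_self, mul_one] at h2
    have := hdesc
    unfold CoxeterSystem.IsRightDescent at this
    omega
  · rintro ⟨hinv, hne⟩
    have hmem : σ i * t * σ i ∈ cs.rightInvSeq (ω₀.concat i) :=
      strongExchange cs hinv hprod
    rw [cs.rightInvSeq_concat, List.concat_eq_append] at hmem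
    rcases List.mem_append.mp hmem with hm | hm
    · obtain ⟨t₀, ht₀, heq⟩ := List.mem_map.mp hm
      rw [MulAut.conj_apply, cs.inv_simple] at heq
      have ht₀t : t₀ = t := by
        have h1 := congrArg (fun z => σ i * z * σ i) heq
        have h2 : σ i * (σ i * t₀ * σ i) * σ i = t₀ := by simp [mul_assoc]
        have h3 : σ i * (σ i * t * σ i) * σ i = t := by simp [mul_assoc]
        rw [h2, h3] at h1
        exact h1
      subst ht₀t
      have := cs.isRightInversion_of_mem_rightInvSeq hred₀ ht₀
      rwa [← hprod₀] at this
    · exfalso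
      apply hne
      simpa using hm

lemma eq_of_isRightInversion_iff : ∀ (n : ℕ) (u w : W), cs.length u ≤ n →
    (∀ t, cs.IsRightInversion u t ↔ cs.IsRightInversion w t) → u = w := by
  intro n
  induction n with
  | zero =>
      intro u w hu hiff
      have hu1 : u = 1 := cs.length_eq_zero_iff.mp (by omega)
      subst hu1
      have hw1 : w = 1 := by
        apply eq_one_of_no_inversion
        intro t ht
        have h1 := ((hiff t).mpr ht).2
        rw [one_mul, cs.length_one] at h1
        omega
      rw [hw1]
  | succ n ih =>
      intro u w hu hiff
      by_cases hu1 : u = 1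
      · subst hu1
        have hw1 : w = 1 := by
          apply eq_one_of_no_inversion
          intro t ht
          have h1 := ((hiff t).mpr ht).2
          rw [one_mul, cs.length_one] at h1
          omega
        rw [hw1]
      · obtain ⟨i, hdesc⟩ := cs.exists_rightDescent_of_ne_one hu1
        have hdesc_w : cs.IsRightDescent w i :=
          ((hiff (σ i)).mp ⟨cs.isReflection_simple i, hdesc⟩).2
        have hiff' : ∀ t, cs.IsRightInversion (u * σ i) t ↔
            cs.IsRightInversion (w * σ i) t := by
          intro t
          rw [isRightInversion_mul_simple_iff cs hdesc t,
            isRightInversion_mul_simple_iff cs hdesc_w t, hiff]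
        have hlen : cs.length (u * σ i) ≤ n := by
          have h1 : cs.length (u * σ i) < cs.length u := hdesc
          omega
        have hmain := ih (u * σ i) (w * σ i) hlen hiff'
        have h2 := congrArg (fun z => z * σ i) hmain
        simpa [mul_assoc] using h2

/-! ### The longest element of a parabolic subgroup is an involution -/

lemma isRightInversion_iff_of_max {I : Set W} (hIs : I ⊆ Set.range cs.simple) {a : W}
    (ha : a ∈ Subgroup.closure I)
    (hmax : ∀ u ∈ Subgroup.closure I, cs.length u ≤ cs.length a) (t : W) :
    cs.IsRightInversion a t ↔ (cs.IsReflection t ∧ t ∈ Subgroup.closure I) := by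
  constructor
  · intro h
    refine ⟨h.1, ?_⟩
    obtain ⟨ω, hred, hprod, hlet⟩ := exists_reduced_word_letters cs hIs ha
    exact ris_mem_closure cs hlet (strongExchange cs h hprod)
  · rintro ⟨hrefl, hmem⟩
    refine ⟨hrefl, ?_⟩
    have h1 : cs.length (a * t) ≠ cs.length a := hrefl.length_mul_left_ne a
    have h2 : cs.length (a * t) ≤ cs.length a := hmax _ (mul_mem ha hmem)
    omega

lemma longest_mul_self {I : Set W} (hIs : I ⊆ Set.range cs.simple) {a : W}
    (ha : a ∈ Subgroup.closure I)
    (hmax : ∀ u ∈ Subgroup.closure I, cs.length u ≤ cs.length a) :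
    a * a = 1 := by
  have ha' : a⁻¹ ∈ Subgroup.closure I := inv_mem ha
  have hmax' : ∀ u ∈ Subgroup.closure I, cs.length u ≤ cs.length a⁻¹ := by
    rw [cs.length_inv]
    exact hmax
  have hiff : ∀ t, cs.IsRightInversion a⁻¹ t ↔ cs.IsRightInversion a t := by
    intro t
    rw [isRightInversion_iff_of_max cs hIs ha' hmax' t,
      isRightInversion_iff_of_max cs hIs ha hmax t]
  have heq : a⁻¹ = a :=
    eq_of_isRightInversion_iff cs (cs.length a⁻¹) a⁻¹ a le_rfl hiff
  calc a * a = a * a⁻¹ := by rw [heq]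
    _ = 1 := mul_inv_cancel a


/-! ### Dihedral length bound -/

lemma length_pow_le (x : W) (k : ℕ) : cs.length (x ^ k) ≤ k * cs.length x := by
  induction k with
  | zero => simp
  | succ k ih =>
      rw [pow_succ]
      calc cs.length (x ^ k * x) ≤ cs.length (x ^ k) + cs.length x := cs.length_mul_le _ _
        _ ≤ k * cs.length x + cs.length x := add_le_add_left ih _
        _ = (k + 1) * cs.length x := by ring

lemma dihedral_length_bound {a b : W} (ha2 : a * a = 1) (hb2 : b * b = 1)
    (ha1 : a ≠ 1) (hb1 : b ≠ 1)
    (hfin : Finite ↥(Subgroup.closure ({a, b} : Set W))) (m : ℕ)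
    (hcard : Nat.card ↥(Subgroup.closure ({a, b} : Set W)) = 2 * m)
    {y : W} (hy : y ∈ Subgroup.closure ({a, b} : Set W)) :
    2 * cs.length y ≤ m * (cs.length a + cs.length b) := by
  set G := Subgroup.closure ({a, b} : Set W) with hG
  have haG : a ∈ G := Subgroup.subset_closure (by simp)
  have hbG : b ∈ G := Subgroup.subset_closure (by simp)
  have hm_pos : 1 ≤ m := by
    have : 0 < Nat.card ↥G := Nat.card_pos
    omega
  have hainv : a⁻¹ = a := inv_eq_of_mul_eq_one_right ha2
  have hbinv : b⁻¹ = b := inv_eq_of_mul_eq_one_right hb2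
  set r := a * b with hr
  have hrG : r ∈ G := mul_mem haG hbG
  set n := orderOf r with hn
  have hcoe : orderOf r = orderOf (⟨r, hrG⟩ : ↥G) := Subgroup.orderOf_coe ⟨r, hrG⟩
  have hn_pos : 0 < n := by
    rw [hn, hcoe]
    exact orderOf_pos _
  have hrn : r ^ n = 1 := pow_orderOf_eq_one r
  have hrinv : r⁻¹ = b * a := by
    apply inv_eq_of_mul_eq_one_right
    calc (a * b) * (b * a) = a * (b * b) * a := by group
      _ = 1 := by rw [hb2, mul_one, ha2]
  have hA : ∀ k : ℕ, a * r ^ k = (r ^ k)⁻¹ * a := by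
    intro k
    have h1 : a * r * a = r⁻¹ := by
      rw [hrinv, hr]
      calc a * (a * b) * a = (a * a) * (b * a) := by group
        _ = b * a := by rw [ha2, one_mul]
    have hc := conj_pow (a := a) (b := r) (i := k)
    rw [hainv] at hc
    calc a * r ^ k = (a * r ^ k * a) * a := by
          rw [mul_assoc, ha2, mul_one]
      _ = (a * r * a) ^ k * a := by rw [hc]
      _ = (r ^ k)⁻¹ * a := by rw [h1, inv_pow]
  have hpowinv : ∀ k : ℕ, (r ^ k)⁻¹ = r ^ (k * (n - 1)) := by
    intro k
    apply inv_eq_of_mul_eq_one_right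
    rw [← pow_add]
    obtain ⟨n', hn'⟩ : ∃ n', n = n' + 1 := ⟨n - 1, by omega⟩
    have he : k + k * (n - 1) = n * k := by
      rw [hn', Nat.add_sub_cancel]
      ring
    rw [he, pow_mul, hrn, one_pow]
  have hdecomp : ∀ x ∈ G, ∃ k : ℕ, x = r ^ k ∨ x = r ^ k * a := by
    intro x hx
    induction hx using Subgroup.closure_induction with
    | mem z hz =>
        rcases hz with hz | hz
        · exact ⟨0, Or.inr (by rw [hz, pow_zero, one_mul])⟩
        · refine ⟨n - 1, Or.inr ?_⟩
          have h1 : r ^ (n - 1) = r⁻¹ := by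
            apply eq_inv_of_mul_eq_one_left
            rw [← pow_succ]
            have : n - 1 + 1 = n := by omega
            rw [this, hrn]
          rw [h1, hrinv, mul_assoc, ha2, mul_one, hz]
    | one => exact ⟨0, Or.inl (by rw [pow_zero])⟩
    | mul z w hz hw ihz ihw =>
        obtain ⟨j, hj⟩ := ihz
        obtain ⟨k, hk⟩ := ihw
        rcases hj with hj | hj <;> rcases hk with hk | hk
        · exact ⟨j + k, Or.inl (by rw [hj, hk, pow_add])⟩
        · exact ⟨j + k, Or.inr (by rw [hj, hk, pow_add, mul_assoc])⟩
        · refine ⟨j + k * (n - 1), Or.inr ?_⟩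
          rw [hj, hk, pow_add]
          calc r ^ j * a * r ^ k = r ^ j * (a * r ^ k) := by rw [mul_assoc]
            _ = r ^ j * ((r ^ k)⁻¹ * a) := by rw [hA]
            _ = r ^ j * (r ^ (k * (n - 1)) * a) := by rw [hpowinv]
            _ = r ^ j * r ^ (k * (n - 1)) * a := by rw [mul_assoc]
        · refine ⟨j + k * (n - 1), Or.inl ?_⟩
          rw [hj, hk, pow_add]
          calc r ^ j * a * (r ^ k * a) = r ^ j * (a * r ^ k) * a := by group
            _ = r ^ j * ((r ^ k)⁻¹ * a) * a := by rw [hA]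
            _ = r ^ j * (r ^ (k * (n - 1)) * a) * a := by rw [hpowinv]
            _ = r ^ j * r ^ (k * (n - 1)) * (a * a) := by group
            _ = r ^ j * r ^ (k * (n - 1)) := by rw [ha2, mul_one]
    | inv z hz ihz =>
        obtain ⟨k, hk⟩ := ihz
        rcases hk with hk | hk
        · exact ⟨k * (n - 1), Or.inl (by rw [hk, hpowinv])⟩
        · refine ⟨k * (n - 1) * (n - 1), Or.inr ?_⟩
          rw [hk, mul_inv_rev, hainv]
          calc a * (r ^ k)⁻¹ = a * r ^ (k * (n - 1)) := by rw [hpowinv]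
            _ = (r ^ (k * (n - 1)))⁻¹ * a := by rw [hA]
            _ = r ^ (k * (n - 1) * (n - 1)) * a := by rw [hpowinv]
  -- |G| ≤ 2 n
  have hsurj : Function.Surjective (fun p : Fin n × Bool =>
      (if p.2 then (⟨r ^ (p.1 : ℕ) * a, mul_mem (pow_mem hrG _) haG⟩ : ↥G)
        else ⟨r ^ (p.1 : ℕ), pow_mem hrG _⟩)) := by
    rintro ⟨x, hx⟩
    obtain ⟨k, hk⟩ := hdecomp x hx
    rcases hk with hk | hk
    · refine ⟨(⟨k % n, Nat.mod_lt _ hn_pos⟩, false), ?_⟩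
      simp only [if_neg Bool.false_ne_true]
      apply Subtype.ext
      show r ^ (k % n) = x
      rw [hk, pow_mod_orderOf]
    · refine ⟨(⟨k % n, Nat.mod_lt _ hn_pos⟩, true), ?_⟩
      simp only [if_pos]
      apply Subtype.ext
      show r ^ (k % n) * a = x
      rw [hk, pow_mod_orderOf]
  have hle : Nat.card ↥G ≤ n * 2 := by
    have h1 := Nat.card_le_card_of_surjective _ hsurj
    have h2 : Nat.card (Fin n × Bool) = n * 2 := by
      simp [Nat.card_eq_fintype_card]
    omega
  have hmn : m ≤ n := by omega
  have hdvd : n ∣ 2 * m := by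
    have h2 := orderOf_dvd_natCard (⟨r, hrG⟩ : ↥G)
    rwa [← hcoe, ← hn, hcard] at h2
  have hnm : n = m := by
    rcases hdvd with ⟨d, hd⟩
    have hd2 : d ≤ 2 := by nlinarith
    interval_cases d
    · omega
    · -- n = 2 m : degenerate case, contradiction
      exfalso
      have hn2m : n = 2 * m := by omega
      have hzle : Subgroup.zpowers r ≤ G := Subgroup.zpowers_le.mpr hrG
      have hseq : (Subgroup.zpowers r : Set W) = (G : Set W) := by
        apply Set.eq_of_subset_of_ncard_le hzle
        · have e1 : (Subgroup.zpowers r : Set W).ncard = n := by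
            rw [← Nat.card_coe_set_eq, SetLike.coe_sort_coe, Nat.card_zpowers, hn]
          have e2 : (G : Set W).ncard = 2 * m := by
            rw [← Nat.card_coe_set_eq, SetLike.coe_sort_coe, hcard]
          omega
      have haz : a ∈ Subgroup.zpowers r := by
        have : a ∈ (G : Set W) := haG
        rw [← hseq] at this
        exact this
      have hbz : b ∈ Subgroup.zpowers r := by
        have : b ∈ (G : Set W) := hbG
        rw [← hseq] at this
        exact this
      obtain ⟨ka, hka⟩ := Subgroup.mem_zpowers_iff.mp haz
      obtain ⟨kb, hkb⟩ := Subgroup.mem_zpowers_iff.mp hbz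
      have hcomm : b * a = a * b := by
        rw [← hka, ← hkb, ← zpow_add, ← zpow_add, add_comm]
      have hr2 : r * r = 1 := by
        calc (a * b) * (a * b) = a * (b * a) * b := by group
          _ = a * (a * b) * b := by rw [hcomm]
          _ = (a * a) * (b * b) := by group
          _ = 1 := by rw [ha2, hb2, mul_one]
      have hnle2 : n ≤ 2 := orderOf_le_of_pow_eq_one (by omega) (by rw [pow_two]; exact hr2)
      have hm1 : m = 1 := by omega
      have hn2 : n = 2 := by omega
      -- a = r and b = r
      have hval : ∀ (k : ℤ) (x : W), r ^ k = x → x ≠ 1 → x = r := by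
        intro k x hkx hx1
        have h1 : r ^ (k % (n : ℤ)) = x := by
          have hz := zpow_mod_orderOf r k
          rw [← hn] at hz
          rw [hz, hkx]
        have h2 : k % (n : ℤ) = 0 ∨ k % (n : ℤ) = 1 := by
          rw [hn2]; omega
        rcases h2 with h2 | h2
        · rw [h2] at h1; simp at h1; exact absurd h1.symm hx1
        · rw [h2] at h1; simpa using h1.symm
      have ha_r : a = r := hval ka a hka ha1
      have hb_r : b = r := hval kb b hkb hb1
      have hr1 : r = 1 := hr.trans (by rw [ha_r, hb_r]; exact hr2)
      have ho : orderOf r = 2 := by rw [← hn, hn2]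
      rw [hr1, orderOf_one] at ho
      omega
    · omega
  have hrm : r ^ m = 1 := by rw [← hnm]; exact hrn
  -- final estimates
  obtain ⟨k, hk⟩ := hdecomp y hy
  set k' := k % m with hk'def
  have hk'm : k' < m := Nat.mod_lt _ (by omega)
  have hrk : r ^ k = r ^ k' := by
    have h1 : r ^ k = (r ^ m) ^ (k / m) * r ^ (k % m) := by
      rw [← pow_mul, ← pow_add, Nat.div_add_mod]
    rw [hrm, one_pow, one_mul] at h1
    exact h1
  have hlr : cs.length r ≤ cs.length a + cs.length b := cs.length_mul_le a b
  have hlrpow : ∀ j : ℕ, cs.length (r ^ j) ≤ j * (cs.length a + cs.length b) := by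
    intro j
    calc cs.length (r ^ j) ≤ j * cs.length r := length_pow_le cs r j
      _ ≤ j * (cs.length a + cs.length b) := Nat.mul_le_mul_left j hlr
  rcases hk with hk | hk
  · -- y = r ^ k'
    rw [hrk] at hk
    have h1 : cs.length y ≤ k' * (cs.length a + cs.length b) := by
      rw [hk]; exact hlrpow k'
    have h2 : cs.length y ≤ (m - k') * (cs.length a + cs.length b) := by
      have hinv : y⁻¹ = r ^ (m - k') := by
        rw [hk]
        apply inv_eq_of_mul_eq_one_right
        rw [← pow_add]
        have : k' + (m - k') = m := by omega
        rw [this, hrm]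
      have := hlrpow (m - k')
      rw [← hinv, cs.length_inv] at this
      exact this
    have hco : k' * (cs.length a + cs.length b) + (m - k') * (cs.length a + cs.length b)
        = m * (cs.length a + cs.length b) := by
      rw [← add_mul]
      congr 1
      omega
    omega
  · -- y = r ^ k' * a
    rw [hrk] at hk
    have h1 : cs.length y ≤ k' * (cs.length a + cs.length b) + cs.length a := by
      rw [hk]
      calc cs.length (r ^ k' * a) ≤ cs.length (r ^ k') + cs.length a := cs.length_mul_le _ _
        _ ≤ k' * (cs.length a + cs.length b) + cs.length a :=
            add_le_add_left (hlrpow k') _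
    have h2 : cs.length y ≤ cs.length b + (m - 1 - k') * (cs.length a + cs.length b) := by
      have hinv : y⁻¹ = b * r ^ (m - 1 - k') := by
        rw [hk]
        apply inv_eq_of_mul_eq_one_right
        calc r ^ k' * a * (b * r ^ (m - 1 - k')) = r ^ k' * (a * b) * r ^ (m - 1 - k') := by
              group
          _ = r ^ k' * r ^ 1 * r ^ (m - 1 - k') := by rw [pow_one, hr]
          _ = r ^ (k' + 1 + (m - 1 - k')) := by rw [← pow_add, ← pow_add]
          _ = 1 := by
              have : k' + 1 + (m - 1 - k') = m := by omega
              rw [this, hrm]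
      have h3 : cs.length (b * r ^ (m - 1 - k'))
          ≤ cs.length b + (m - 1 - k') * (cs.length a + cs.length b) := by
        calc cs.length (b * r ^ (m - 1 - k'))
            ≤ cs.length b + cs.length (r ^ (m - 1 - k')) := cs.length_mul_le _ _
          _ ≤ cs.length b + (m - 1 - k') * (cs.length a + cs.length b) :=
              add_le_add_right (hlrpow _) _
      rw [← hinv, cs.length_inv] at h3
      exact h3
    have hco : (k' * (cs.length a + cs.length b) + cs.length a)
        + (cs.length b + (m - 1 - k') * (cs.length a + cs.length b))
        = m * (cs.length a + cs.length b) := by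
      have he : k' + 1 + (m - 1 - k') = m := by omega
      calc (k' * (cs.length a + cs.length b) + cs.length a)
          + (cs.length b + (m - 1 - k') * (cs.length a + cs.length b))
          = (k' + 1 + (m - 1 - k')) * (cs.length a + cs.length b) := by ring
        _ = m * (cs.length a + cs.length b) := by rw [he]
    omega

end StrongExch


open CoxeterSystem

/-- with `K = I ∪ J` (`I ≠ J` in `S̄`), `W_K` finite and `|W_K^Γ| = 2m`,
every `y ∈ W_K^Γ` satisfies `l(y) ≤ (m/2)(l(w_I) + l(w_J))`. -/
theorem length_le_of_mem_fixedPoints_union {B W : Type*} [Finite B] [Group W]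
    {M : CoxeterMatrix B}
    (cs : CoxeterSystem M W) (Γ : Subgroup (MulAut W))
    (hΓ : ∀ γ ∈ Γ, ⇑γ '' Set.range cs.simple = Set.range cs.simple)
    (wI : Set W → W)
    (hwI : ∀ I : Set W, IsFinParabolicOrbit cs Γ I → IsLongestIn cs I (wI I))
    (I J : Set W) (hI : IsFinParabolicOrbit cs Γ I) (hJ : IsFinParabolicOrbit cs Γ J)
    (hIJ : I ≠ J) (hK : Finite ↥(Subgroup.closure (I ∪ J)))
    (m : ℕ)
    (hm : Nat.card {w : W | w ∈ Subgroup.closure (I ∪ J) ∧ ∀ γ ∈ Γ, γ w = w} = 2 * m)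
    (hdih : {w : W | w ∈ Subgroup.closure (I ∪ J) ∧ ∀ γ ∈ Γ, γ w = w} =
      (Subgroup.closure {wI I, wI J} : Set W))
    (y : W) (hy : y ∈ Subgroup.closure (I ∪ J)) (hyfix : ∀ γ ∈ Γ, γ y = y) :
    2 * cs.length y ≤ m * (cs.length (wI I) + cs.length (wI J)) := by
  obtain ⟨haI, hamax⟩ := hwI I hI
  obtain ⟨hbJ, hbmax⟩ := hwI J hJ
  -- orbits consist of simple reflections
  have horbsub : ∀ (K : Set W), IsFinParabolicOrbit cs Γ K → K ⊆ Set.range cs.simple := by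
    rintro K ⟨⟨s, hs, horb⟩, _⟩ t ht
    rw [horb] at ht
    obtain ⟨γ, hγ, rfl⟩ := ht
    rw [← hΓ γ hγ]
    exact Set.mem_image_of_mem _ hs
  have hIs : I ⊆ Set.range cs.simple := horbsub I hI
  have hJs : J ⊆ Set.range cs.simple := horbsub J hJ
  -- the longest elements are involutions
  have ha2 : wI I * wI I = 1 := StrongExch.longest_mul_self cs hIs haI hamax
  have hb2 : wI J * wI J = 1 := StrongExch.longest_mul_self cs hJs hbJ hbmax
  -- the longest elements are nontrivial
  have hne1 : ∀ (K : Set W) (hK' : IsFinParabolicOrbit cs Γ K),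
      (∀ u ∈ Subgroup.closure K, cs.length u ≤ cs.length (wI K)) → wI K ≠ 1 := by
    rintro K ⟨⟨s, hs, horb⟩, _⟩ hmax hcon
    have hsK : s ∈ K := by
      rw [horb]
      exact ⟨1, Γ.one_mem, rfl⟩
    obtain ⟨i, rfl⟩ := hs
    have h1 := hmax _ (Subgroup.subset_closure hsK)
    rw [cs.length_simple, hcon, cs.length_one] at h1
    omega
  have ha1 : wI I ≠ 1 := hne1 I hI hamax
  have hb1 : wI J ≠ 1 := hne1 J hJ hbmax
  -- membership of y
  have hyG : y ∈ Subgroup.closure ({wI I, wI J} : Set W) := by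
    have hmem : y ∈ {w : W | w ∈ Subgroup.closure (I ∪ J) ∧ ∀ γ ∈ Γ, γ w = w} :=
      ⟨hy, hyfix⟩
    rw [hdih] at hmem
    exact hmem
  -- the dihedral subgroup is contained in W_K
  have hsub : (Subgroup.closure ({wI I, wI J} : Set W) : Set W)
      ⊆ (Subgroup.closure (I ∪ J) : Set W) := by
    rw [← hdih]
    intro x hx
    exact hx.1
  -- finiteness
  have hKfin : ((Subgroup.closure (I ∪ J) : Subgroup W) : Set W).Finite := by
    apply Set.finite_coe_iff.mp
    rw [SetLike.coe_sort_coe]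
    exact hK
  have hfinG : Finite ↥(Subgroup.closure ({wI I, wI J} : Set W)) := by
    have h2 := Set.finite_coe_iff.mpr (hKfin.subset hsub)
    rwa [SetLike.coe_sort_coe] at h2
  -- cardinality
  have hcardG : Nat.card ↥(Subgroup.closure ({wI I, wI J} : Set W)) = 2 * m := by
    rw [hdih] at hm
    rwa [SetLike.coe_sort_coe] at hm
  exact StrongExch.dihedral_length_bound cs ha2 hb2 ha1 hb1 hfinG m hcardG hyG
end
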